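/- arXiv:2205.04901 — 7 statements merged into one kernel-verified Lean document; each statement's English description precedes it below -/
import Mathlib

section
/- Let E be a real inner product space, let u, u₁, …, uₙ be elements of E, and let σ > 0. Let K be the n×n real matrix with entries K i j = ⟪uᵢ, uⱼ⟫ and let κ ∈ ℝⁿ be the vector with entries κ i = ⟪uᵢ, u⟫. Then the matrix K + σ²·I is invertible, and, defining the weight vector w = (K + σ²·I)⁻¹ κ, one has the identity ‖(∑ᵢ wᵢ • uᵢ) − u‖² = ⟪u, u⟫ − κᵀ (K + σ²·I)⁻¹ κ − σ² ∑ᵢ wᵢ². -/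
open Matrix
open scoped RealInnerProductSpace

theorem stmt_0 {E : Type*} [NormedAddCommGroup E] [InnerProductSpace ℝ E]
    {n : ℕ} (u : E) (u' : Fin n → E) (σ : ℝ) (hσ : 0 < σ)
    (K : Matrix (Fin n) (Fin n) ℝ) (hK : ∀ i j, K i j = ⟪u' i, u' j⟫)
    (κ : Fin n → ℝ) (hκ : ∀ i, κ i = ⟪u' i, u⟫)
    (w : Fin n → ℝ)
    (hw : w = (K + σ ^ 2 • (1 : Matrix (Fin n) (Fin n) ℝ))⁻¹ *ᵥ κ) :
    IsUnit (K + σ ^ 2 • (1 : Matrix (Fin n) (Fin n) ℝ)) ∧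
      ‖(∑ i, w i • u' i) - u‖ ^ 2 =
        ⟪u, u⟫ - κ ⬝ᵥ ((K + σ ^ 2 • (1 : Matrix (Fin n) (Fin n) ℝ))⁻¹ *ᵥ κ)
          - σ ^ 2 * ∑ i, w i ^ 2 := by
  set A := K + σ ^ 2 • (1 : Matrix (Fin n) (Fin n) ℝ) with hA
  -- quadratic form of K is a squared norm
  have hquad : ∀ x : Fin n → ℝ, x ⬝ᵥ (K *ᵥ x) = ⟪∑ i, x i • u' i, ∑ j, x j • u' j⟫ := by
    intro x
    simp only [dotProduct, Matrix.mulVec, hK, sum_inner, inner_sum,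
      real_inner_smul_left, real_inner_smul_right, Finset.mul_sum]
    rw [Finset.sum_comm]
    congr 1; ext i; congr 1; ext j; ring
  have hKsym : K.IsHermitian := by
    ext i j
    simp [Matrix.IsHermitian, hK, Matrix.conjTranspose_apply, real_inner_comm]
  have hApd : A.PosDef := by
    refine Matrix.posDef_iff_dotProduct_mulVec.mpr ⟨?_, ?_⟩
    · ext i j
      simp only [hA, Matrix.conjTranspose_apply, Matrix.add_apply, Matrix.smul_apply,
        Matrix.one_apply, star_trivial, hK]
      rw [real_inner_comm]
      congr 1
      simp [eq_comm]
    · intro x hx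
      have h1 : x ⬝ᵥ (A *ᵥ x) = x ⬝ᵥ (K *ᵥ x) + σ ^ 2 * ∑ i, x i ^ 2 := by
        rw [hA, Matrix.add_mulVec, dotProduct_add, Matrix.smul_mulVec,
          Matrix.one_mulVec, dotProduct_smul]
        congr 1
        simp [dotProduct, smul_eq_mul, Finset.mul_sum, sq]
      have h2 : (0:ℝ) ≤ x ⬝ᵥ (K *ᵥ x) := by
        rw [hquad]; exact real_inner_self_nonneg
      have h3 : 0 < ∑ i, x i ^ 2 := by
        have : ∃ i, x i ≠ 0 := by
          by_contra h
          push_neg at h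
          exact hx (funext h)
        obtain ⟨i, hi⟩ := this
        exact Finset.sum_pos' (fun j _ => sq_nonneg _)
          ⟨i, Finset.mem_univ i, by positivity⟩
      simp only [star_trivial]
      rw [h1]
      nlinarith [mul_pos (pow_pos hσ 2) h3]
  have hunit : IsUnit A := by
    rw [Matrix.isUnit_iff_isUnit_det]
    exact hApd.det_pos.ne'.isUnit
  refine ⟨hunit, ?_⟩
  have hAw : A *ᵥ w = κ := by
    rw [hw, Matrix.mulVec_mulVec, Matrix.mul_nonsing_inv _ ((Matrix.isUnit_iff_isUnit_det A).mp hunit), Matrix.one_mulVec]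
  have hKw : w ⬝ᵥ (K *ᵥ w) = w ⬝ᵥ κ - σ ^ 2 * ∑ i, w i ^ 2 := by
    have : K *ᵥ w = κ - σ ^ 2 • w := by
      rw [← hAw, hA, Matrix.add_mulVec, Matrix.smul_mulVec, Matrix.one_mulVec]
      abel
    rw [this, dotProduct_sub, dotProduct_smul]
    congr 1
    simp [dotProduct, smul_eq_mul, Finset.mul_sum, sq, mul_comm, mul_left_comm]
  set v := ∑ i, w i • u' i with hv
  have h1 : ⟪v, v⟫ = w ⬝ᵥ (K *ᵥ w) := (hquad w).symm
  have h2 : ⟪v, u⟫ = w ⬝ᵥ κ := by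
    simp [hv, sum_inner, real_inner_smul_left, hκ, dotProduct]
  have h4 : κ ⬝ᵥ (A⁻¹ *ᵥ κ) = w ⬝ᵥ κ := by
    rw [← hw, dotProduct_comm]
  have hnorm : ‖v - u‖ ^ 2 = ‖v‖ ^ 2 - 2 * ⟪v, u⟫ + ‖u‖ ^ 2 := by
    rw [norm_sub_sq_real]
  rw [hnorm, ← real_inner_self_eq_norm_sq, ← real_inner_self_eq_norm_sq, h1, h2, h4, hKw]
  ring
end

section
/- Let E be a real inner product space, let u, u₁, …, uₙ be elements of E, and let σ > 0. Let K be the n×n real matrix with entries K i j = ⟪uᵢ, uⱼ⟫, let κ ∈ ℝⁿ have entries κ i = ⟪uᵢ, u⟫, let w = (K + σ²·I)⁻¹ κ, and set σ*² = ⟪u, u⟫ − κᵀ (K + σ²·I)⁻¹ κ. Let f ∈ E and B ≥ 1 with ‖f‖ ≤ B. Then ((∑ᵢ wᵢ ⟪f, uᵢ⟫) − ⟪f, u⟫)² + σ² ∑ᵢ wᵢ² ≤ B² σ*². -/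
open Matrix
open scoped RealInnerProductSpace

theorem stmt_1 {E : Type*} [NormedAddCommGroup E] [InnerProductSpace ℝ E]
    {n : ℕ} (u : E) (u' : Fin n → E) (σ : ℝ) (hσ : 0 < σ)
    (K : Matrix (Fin n) (Fin n) ℝ) (hK : ∀ i j, K i j = ⟪u' i, u' j⟫)
    (κ : Fin n → ℝ) (hκ : ∀ i, κ i = ⟪u' i, u⟫)
    (w : Fin n → ℝ)
    (hw : w = (K + σ ^ 2 • (1 : Matrix (Fin n) (Fin n) ℝ))⁻¹ *ᵥ κ)
    (σstarSq : ℝ)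
    (hσstar : σstarSq =
      ⟪u, u⟫ - κ ⬝ᵥ ((K + σ ^ 2 • (1 : Matrix (Fin n) (Fin n) ℝ))⁻¹ *ᵥ κ))
    (f : E) (B : ℝ) (hB : 1 ≤ B) (hf : ‖f‖ ≤ B) :
    ((∑ i, w i * ⟪f, u' i⟫) - ⟪f, u⟫) ^ 2 + σ ^ 2 * ∑ i, w i ^ 2 ≤
      B ^ 2 * σstarSq := by
  set A : Matrix (Fin n) (Fin n) ℝ := K + σ ^ 2 • (1 : Matrix (Fin n) (Fin n) ℝ) with hA
  -- quadratic form of K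
  have hKform : ∀ x : Fin n → ℝ,
      x ⬝ᵥ (K *ᵥ x) = ⟪∑ i, x i • u' i, ∑ i, x i • u' i⟫ := by
    intro x
    rw [sum_inner]
    simp only [inner_sum, real_inner_smul_left, real_inner_smul_right,
      dotProduct, mulVec, hK, Finset.mul_sum]
    refine Finset.sum_congr rfl fun i _ => Finset.sum_congr rfl fun j _ => by ring
  -- K is PSD
  have hKps : K.PosSemidef := by
    refine Matrix.PosSemidef.of_dotProduct_mulVec_nonneg ?_ fun x => ?_
    · ext i j
      simp [Matrix.conjTranspose, hK, real_inner_comm]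
    · simp only [star_trivial, hKform x]
      exact real_inner_self_nonneg
  -- A is positive definite
  have hApd : A.PosDef := by
    refine Matrix.PosDef.posSemidef_add hKps ?_
    have h1 : σ ^ 2 • (1 : Matrix (Fin n) (Fin n) ℝ)
        = Matrix.diagonal (fun _ => σ ^ 2) := by
      rw [smul_one_eq_diagonal]
    rw [h1]
    exact Matrix.PosDef.diagonal fun _ => by positivity
  have hAdet : IsUnit A.det := hApd.det_pos.ne'.isUnit
  have hAw : A *ᵥ w = κ := by
    rw [hw, mulVec_mulVec, Matrix.mul_nonsing_inv A hAdet, one_mulVec]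
  -- the key identity
  set v : E := (∑ i, w i • u' i) - u with hv
  have hwκ : w ⬝ᵥ κ = κ ⬝ᵥ (A⁻¹ *ᵥ κ) := by
    rw [hw, dotProduct_comm]
  have hsu : ⟪∑ i, w i • u' i, u⟫ = w ⬝ᵥ κ := by
    rw [sum_inner, dotProduct]
    refine Finset.sum_congr rfl fun i _ => ?_
    rw [real_inner_smul_left, hκ]
  have hident : σstarSq = ‖v‖ ^ 2 + σ ^ 2 * ∑ i, w i ^ 2 := by
    have hnv : ‖v‖ ^ 2 = w ⬝ᵥ (K *ᵥ w) - 2 * (w ⬝ᵥ κ) + ⟪u, u⟫ := by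
      rw [← real_inner_self_eq_norm_sq, hv, real_inner_sub_sub_self, hKform, hsu]
    have hAq : w ⬝ᵥ (A *ᵥ w) = w ⬝ᵥ (K *ᵥ w) + σ ^ 2 * ∑ i, w i ^ 2 := by
      rw [hA, add_mulVec, dotProduct_add, smul_mulVec, one_mulVec,
        dotProduct_smul]
      congr 1
      simp [dotProduct, smul_eq_mul, sq]
    have hAq2 : w ⬝ᵥ (A *ᵥ w) = w ⬝ᵥ κ := by rw [hAw]
    rw [hσstar, ← hwκ, hnv]
    linarith [hAq, hAq2]
  -- Cauchy-Schwarz step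
  have hfv : (∑ i, w i * ⟪f, u' i⟫) - ⟪f, u⟫ = ⟪f, v⟫ := by
    rw [hv, inner_sub_right, inner_sum]
    simp only [real_inner_smul_right]
  have hcs : ⟪f, v⟫ ^ 2 ≤ B ^ 2 * ‖v‖ ^ 2 := by
    have h := abs_real_inner_le_norm f v
    have hb : ‖f‖ * ‖v‖ ≤ B * ‖v‖ :=
      mul_le_mul_of_nonneg_right hf (norm_nonneg v)
    have h2 : |⟪f, v⟫| ≤ B * ‖v‖ := h.trans hb
    have h3 : (0:ℝ) ≤ |⟪f, v⟫| := abs_nonneg _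
    nlinarith [sq_abs (⟪f, v⟫ : ℝ)]
  have hB2 : (1:ℝ) ≤ B ^ 2 := by nlinarith
  have hsum : (0:ℝ) ≤ σ ^ 2 * ∑ i, w i ^ 2 := by positivity
  rw [hfv, hident]
  nlinarith [hcs, hsum, hB2]
end

section
/- Let E be a real inner product space, let u, u₁, …, uₙ be elements of E, and let σ > 0. Let K be the n×n real matrix with entries K i j = ⟪uᵢ, uⱼ⟫, let κ ∈ ℝⁿ have entries κ i = ⟪uᵢ, u⟫, let w = (K + σ²·I)⁻¹ κ, and set σ*² = ⟪u, u⟫ − κᵀ (K + σ²·I)⁻¹ κ. Let f ∈ E and B > 0 with ‖f‖ ≤ B. Then |(∑ᵢ wᵢ ⟪f, uᵢ⟫) − ⟪f, u⟫| ≤ B · √(σ*²). -/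
open Matrix
open scoped RealInnerProductSpace

theorem stmt_2 {E : Type*} [NormedAddCommGroup E] [InnerProductSpace ℝ E]
    {n : ℕ} (u : E) (u' : Fin n → E) (σ : ℝ) (hσ : 0 < σ)
    (K : Matrix (Fin n) (Fin n) ℝ) (hK : ∀ i j, K i j = ⟪u' i, u' j⟫)
    (κ : Fin n → ℝ) (hκ : ∀ i, κ i = ⟪u' i, u⟫)
    (w : Fin n → ℝ)
    (hw : w = (K + σ ^ 2 • (1 : Matrix (Fin n) (Fin n) ℝ))⁻¹ *ᵥ κ)
    (σstarSq : ℝ)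
    (hσstar : σstarSq =
      ⟪u, u⟫ - κ ⬝ᵥ ((K + σ ^ 2 • (1 : Matrix (Fin n) (Fin n) ℝ))⁻¹ *ᵥ κ))
    (f : E) (B : ℝ) (hB : 0 < B) (hf : ‖f‖ ≤ B) :
    |(∑ i, w i * ⟪f, u' i⟫) - ⟪f, u⟫| ≤ B * Real.sqrt σstarSq := by
  set M : Matrix (Fin n) (Fin n) ℝ := K + σ ^ 2 • (1 : Matrix (Fin n) (Fin n) ℝ) with hM
  -- Gram identity
  have gram : ∀ a b : Fin n → ℝ, a ⬝ᵥ (K *ᵥ b) = ⟪(∑ i, a i • u' i), (∑ j, b j • u' j)⟫ := by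
    intro a b
    simp only [dotProduct, mulVec, sum_inner, inner_sum, real_inner_smul_left,
      real_inner_smul_right, hK, Finset.mul_sum]
    rw [Finset.sum_comm]
    refine Finset.sum_congr rfl fun i _ => Finset.sum_congr rfl fun j _ => by ring
  -- M is positive definite
  have hMpd : M.PosDef := by
    rw [Matrix.posDef_iff_dotProduct_mulVec]
    constructor
    · ext i j
      by_cases h : i = j
      · subst h; simp
      · simp [hM, Matrix.conjTranspose_apply, Matrix.one_apply, h, Ne.symm h, hK,
          real_inner_comm]
    · intro x hx
      have h1 : star x ⬝ᵥ (M *ᵥ x) = x ⬝ᵥ (K *ᵥ x) + σ ^ 2 * (x ⬝ᵥ x) := by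
        simp [hM, Matrix.add_mulVec, Matrix.smul_mulVec, dotProduct_add,
          dotProduct_smul, smul_eq_mul]
      rw [h1, gram x x]
      have h2 : (0:ℝ) ≤ ⟪(∑ i, x i • u' i), (∑ j, x j • u' j)⟫ := real_inner_self_nonneg
      have h3 : 0 < x ⬝ᵥ x := by
        obtain ⟨i, hi⟩ := Function.ne_iff.mp hx
        simp only [dotProduct]
        exact Finset.sum_pos' (fun j _ => mul_self_nonneg _)
          ⟨i, Finset.mem_univ i, mul_self_pos.mpr hi⟩
      positivity
  have hMinv : IsUnit M.det := hMpd.det_pos.ne'.isUnit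
  have hMw : M *ᵥ w = κ := by
    rw [hw, Matrix.mulVec_mulVec, Matrix.mul_nonsing_inv M hMinv, Matrix.one_mulVec]
  -- key scalars
  set S : E := ∑ i, w i • u' i with hS
  have hq : w ⬝ᵥ (K *ᵥ w) = ⟪S, S⟫ := gram w w
  have ha : w ⬝ᵥ κ = ⟪S, u⟫ := by
    simp only [dotProduct, hκ, hS, sum_inner, real_inner_smul_left]
  have ha2 : w ⬝ᵥ κ = ⟪S, S⟫ + σ ^ 2 * (w ⬝ᵥ w) := by
    rw [← hMw]
    have : w ⬝ᵥ (M *ᵥ w) = w ⬝ᵥ (K *ᵥ w) + σ ^ 2 * (w ⬝ᵥ w) := by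
      simp [hM, Matrix.add_mulVec, Matrix.smul_mulVec, dotProduct_add,
        dotProduct_smul, smul_eq_mul]
    rw [this, hq]
  have hκw : κ ⬝ᵥ (M⁻¹ *ᵥ κ) = w ⬝ᵥ κ := by rw [← hw, dotProduct_comm]
  have hσs : σstarSq = ⟪u, u⟫ - w ⬝ᵥ κ := by rw [hσstar, hκw]
  -- norm bound
  have hv : ‖S - u‖ ^ 2 = ⟪S, S⟫ - 2 * (w ⬝ᵥ κ) + ⟪u, u⟫ := by
    rw [norm_sub_sq_real, ← real_inner_self_eq_norm_sq, ← real_inner_self_eq_norm_sq, ← ha]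
  have hvle : ‖S - u‖ ^ 2 ≤ σstarSq := by
    rw [hv, hσs, ha2]
    have : (0:ℝ) ≤ w ⬝ᵥ w := by
      simp only [dotProduct]
      exact Finset.sum_nonneg fun i _ => mul_self_nonneg _
    nlinarith [sq_nonneg σ]
  have hnorm : ‖S - u‖ ≤ Real.sqrt σstarSq := by
    have := Real.sqrt_le_sqrt hvle
    rwa [Real.sqrt_sq (norm_nonneg _)] at this
  have hip : (∑ i, w i * ⟪f, u' i⟫) - ⟪f, u⟫ = ⟪f, S - u⟫ := by
    simp [hS, inner_sub_right, inner_sum, real_inner_smul_right, mul_comm]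
  rw [hip]
  calc |⟪f, S - u⟫| ≤ ‖f‖ * ‖S - u‖ := abs_real_inner_le_norm _ _
    _ ≤ B * Real.sqrt σstarSq := by
        apply mul_le_mul hf hnorm (norm_nonneg _) hB.le
end

section
/- Let E be a real inner product space, let u, u₁, …, uₙ be elements of E, and let σ > 0. Let K be the n×n real matrix with entries K i j = ⟪uᵢ, uⱼ⟫, let κ ∈ ℝⁿ have entries κ i = ⟪uᵢ, u⟫, let w = (K + σ²·I)⁻¹ κ, and set σ*² = ⟪u, u⟫ − κᵀ (K + σ²·I)⁻¹ κ. Let f ∈ E and B ≥ 1 with ‖f‖ ≤ B. Let ν be the product measure on ℝⁿ whose i-th factor is the Gaussian measure on ℝ with mean 0 and variance σ². Then ∫ ((∑ᵢ wᵢ (⟪f, uᵢ⟫ + εᵢ)) − ⟪f, u⟫)² dν(ε) ≤ B² σ*². -/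
open Matrix MeasureTheory ProbabilityTheory
open scoped RealInnerProductSpace

section helpers
open MeasureTheory.Measure Real Filter
open scoped NNReal ENNReal

theorem my_integrable_pi_prod {n : ℕ} {μ : Fin n → Measure ℝ} [∀ i, SigmaFinite (μ i)]
    {f : Fin n → ℝ → ℝ} (hf : ∀ i, Integrable (f i) (μ i)) :
    Integrable (fun (x : Fin n → ℝ) ↦ ∏ i, f i (x i)) (Measure.pi μ) := by
  induction n with
  | zero => simp only [Finset.univ_eq_empty, Finset.prod_empty, integrable_const_iff,
      one_ne_zero, pi_empty_univ, ENNReal.one_lt_top, or_true, false_or]; exact ⟨by simp [pi_empty_univ]⟩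
  | succ n n_ih =>
      have := ((measurePreserving_piFinSuccAbove μ 0).symm)
      rw [← this.integrable_comp_emb (MeasurableEquiv.measurableEmbedding _)]
      simp_rw [MeasurableEquiv.piFinSuccAbove_symm_apply, Fin.insertNthEquiv,
        Fin.prod_univ_succ, Fin.insertNth_zero]
      simp only [Fin.zero_succAbove, cast_eq, Function.comp_def, Fin.cons_zero, Fin.cons_succ,
        Equiv.coe_fn_mk]
      have : Integrable (fun (x : Fin n → ℝ) ↦ ∏ j, f (Fin.succ j) (x j))
          (Measure.pi fun j => μ (Fin.succ j)) := n_ih (fun i ↦ hf _)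
      exact Integrable.mul_prod (hf 0) this

theorem my_integral_pi_prod {n : ℕ} (μ : Fin n → Measure ℝ) [∀ i, SigmaFinite (μ i)]
    (f : Fin n → ℝ → ℝ) :
    ∫ x : Fin n → ℝ, ∏ i, f i (x i) ∂Measure.pi μ = ∏ i, ∫ x, f i x ∂μ i := by
  induction n with
  | zero =>
      simp only [Finset.univ_eq_empty, Finset.prod_empty, integral_const,
        measureReal_def, pi_empty_univ, ENNReal.toReal_one, smul_eq_mul, mul_one, one_smul]
  | succ n n_ih =>
      calc
        _ = ∫ x : ℝ × (Fin n → ℝ),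
            f 0 x.1 * ∏ i : Fin n, f (Fin.succ i) (x.2 i)
            ∂(μ 0).prod (Measure.pi fun j => μ (Fin.succ j)) := by
          rw [← ((measurePreserving_piFinSuccAbove μ 0).symm).integral_comp']
          simp_rw [MeasurableEquiv.piFinSuccAbove_symm_apply, Fin.insertNthEquiv,
            Fin.prod_univ_succ, Fin.insertNth_zero, Equiv.coe_fn_mk, Fin.cons_succ,
            Fin.zero_succAbove, cast_eq, Fin.cons_zero]
        _ = (∫ x, f 0 x ∂μ 0) * ∏ i : Fin n, ∫ x, f (Fin.succ i) x ∂μ (Fin.succ i) := by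
          rw [← n_ih fun j => μ (Fin.succ j), ← integral_prod_mul]
        _ = ∏ i, ∫ x, f i x ∂μ i := by rw [Fin.prod_univ_succ]

section gauss
variable {v : ℝ≥0} (hv : v ≠ 0)

lemma my_pdf_eq (x : ℝ) :
    gaussianPDFReal 0 v x = (√(2 * π * v))⁻¹ * rexp (-(2 * (v:ℝ))⁻¹ * x ^ 2) := by
  simp only [gaussianPDFReal, sub_zero]
  rw [show -x ^ 2 / (2 * (v:ℝ)) = -(2 * (v:ℝ))⁻¹ * x ^ 2 by ring]

include hv

lemma my_gauss_integral (g : ℝ → ℝ) :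
    ∫ x, g x ∂(gaussianReal 0 v) = ∫ x, gaussianPDFReal 0 v x * g x := by
  rw [gaussianReal_of_var_ne_zero _ hv]
  have : (gaussianPDF 0 v) = fun x => ((gaussianPDFReal 0 v x).toNNReal : ℝ≥0∞) := rfl
  rw [this, integral_withDensity_eq_integral_smul
    ((measurable_gaussianPDFReal 0 v).real_toNNReal) g]
  congr 1; funext x
  simp [NNReal.smul_def, Real.coe_toNNReal _ (gaussianPDFReal_nonneg 0 v x)]

lemma my_gauss_integrable (g : ℝ → ℝ)
    (h : Integrable (fun x => gaussianPDFReal 0 v x * g x)) :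
    Integrable g (gaussianReal 0 v) := by
  rw [gaussianReal_of_var_ne_zero _ hv]
  have : (gaussianPDF 0 v) = fun x => ((gaussianPDFReal 0 v x).toNNReal : ℝ≥0∞) := rfl
  rw [this, integrable_withDensity_iff_integrable_smul
    ((measurable_gaussianPDFReal 0 v).real_toNNReal)]
  refine h.congr (Filter.Eventually.of_forall fun x => ?_)
  simp [NNReal.smul_def, Real.coe_toNNReal _ (gaussianPDFReal_nonneg 0 v x)]

end gauss

section calc1
variable {b : ℝ} (hb : 0 < b)
include hb

lemma my_tendsto_exp_sq_atTop : Tendsto (fun x : ℝ => rexp (-b * x ^ 2)) atTop (nhds 0) :=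
  tendsto_exp_atBot.comp
    ((tendsto_pow_atTop two_ne_zero).const_mul_atTop_of_neg (neg_lt_zero.2 hb))

lemma my_tendsto_exp_sq_atBot : Tendsto (fun x : ℝ => rexp (-b * x ^ 2)) atBot (nhds 0) := by
  have h := (my_tendsto_exp_sq_atTop hb).comp tendsto_neg_atBot_atTop
  simpa [Function.comp_def] using h

lemma my_hasDerivAt_exp (x : ℝ) :
    HasDerivAt (fun x : ℝ => -(2*b)⁻¹ * rexp (-b * x ^ 2)) (x * rexp (-b * x ^ 2)) x := by
  have := (((hasDerivAt_pow 2 x).const_mul (-b)).exp).const_mul (-(2*b)⁻¹)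
  refine this.congr_deriv ?_
  field_simp
  ring

lemma my_integral_mul_exp : ∫ x : ℝ, x * rexp (-b * x ^ 2) = 0 := by
  have := integral_of_hasDerivAt_of_tendsto (my_hasDerivAt_exp hb)
    (integrable_mul_exp_neg_mul_sq hb)
    (((my_tendsto_exp_sq_atBot hb).const_mul (-(2*b)⁻¹)))
    (((my_tendsto_exp_sq_atTop hb).const_mul (-(2*b)⁻¹)))
  simpa using this

lemma my_integrable_sq_exp : Integrable fun x : ℝ => x ^ 2 * rexp (-b * x ^ 2) := by
  have := integrable_rpow_mul_exp_neg_mul_sq hb (s := 2) (by norm_num)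
  refine this.congr (Filter.Eventually.of_forall fun x => ?_)
  norm_num [show ((2:ℝ)) = ((2:ℕ):ℝ) from by norm_num, Real.rpow_natCast]

lemma my_hasDerivAt_mul_exp (x : ℝ) :
    HasDerivAt (fun x : ℝ => -(2*b)⁻¹ * x * rexp (-b * x ^ 2))
      (x ^ 2 * rexp (-b * x ^ 2) - (2*b)⁻¹ * rexp (-b * x ^ 2)) x := by
  have h1 : HasDerivAt (fun x : ℝ => -(2*b)⁻¹ * x) (-(2*b)⁻¹) x := by
    simpa using (hasDerivAt_id x).const_mul (-(2*b)⁻¹)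
  have h2 : HasDerivAt (fun x : ℝ => rexp (-b * x ^ 2)) (rexp (-b * x ^ 2) * (-b * (2 * x))) x := by
    simpa using ((hasDerivAt_pow 2 x).const_mul (-b)).exp
  have h3 := h1.mul h2
  refine h3.congr_deriv ?_
  field_simp
  ring

lemma my_tendsto_mul_exp_cocompact :
    Tendsto (fun x : ℝ => -(2*b)⁻¹ * x * rexp (-b * x ^ 2)) (cocompact ℝ) (nhds 0) := by
  have h0 : Tendsto (fun x : ℝ => (2*b)⁻¹ * (|x| ^ (1:ℝ) * rexp (-b * x ^ 2)))
      (cocompact ℝ) (nhds 0) := by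
    simpa using (tendsto_rpow_abs_mul_exp_neg_mul_sq_cocompact hb 1).const_mul (2*b)⁻¹
  refine squeeze_zero_norm (fun x => ?_) h0
  rw [Real.rpow_one]
  rw [Real.norm_eq_abs, abs_mul, abs_mul, abs_neg, abs_inv,
    abs_of_nonneg (by positivity : (0:ℝ) ≤ 2*b), abs_of_nonneg (Real.exp_pos _).le]
  exact le_of_eq (by ring)

lemma my_integral_sq_exp : ∫ x : ℝ, x ^ 2 * rexp (-b * x ^ 2) = (2*b)⁻¹ * √(π/b) := by
  have hF : ∫ x : ℝ, (x ^ 2 * rexp (-b * x ^ 2) - (2*b)⁻¹ * rexp (-b * x ^ 2)) = 0 := by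
    have hco := my_tendsto_mul_exp_cocompact hb
    have := integral_of_hasDerivAt_of_tendsto (my_hasDerivAt_mul_exp hb)
      ((my_integrable_sq_exp hb).sub ((integrable_exp_neg_mul_sq hb).const_mul _))
      (hco.mono_left (le_trans le_sup_left cocompact_eq_atBot_atTop.ge))
      (hco.mono_left (le_trans le_sup_right cocompact_eq_atBot_atTop.ge))
    simpa using this
  have hsplit := integral_sub (my_integrable_sq_exp hb) ((integrable_exp_neg_mul_sq hb).const_mul (2*b)⁻¹)
  rw [hF] at hsplit
  have h2 : ∫ x : ℝ, (2*b)⁻¹ * rexp (-b * x ^ 2) = (2*b)⁻¹ * √(π/b) := by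
    rw [integral_const_mul, integral_gaussian]
  linarith [hsplit, h2]
end calc1
section moments
variable {v : ℝ≥0} (hv : v ≠ 0)
include hv

lemma vpos : (0:ℝ) < (v:ℝ) := by positivity
lemma bpos : (0:ℝ) < (2 * (v:ℝ))⁻¹ := by have := vpos hv; positivity

lemma my_gauss_moment1 : ∫ x, x ∂(gaussianReal 0 v) = 0 := by
  rw [my_gauss_integral hv]
  have h : ∀ x:ℝ, gaussianPDFReal 0 v x * x
      = (√(2 * π * v))⁻¹ * (x * rexp (-(2 * (v:ℝ))⁻¹ * x ^ 2)) := fun x => by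
    rw [my_pdf_eq]; ring
  simp_rw [h]
  rw [integral_const_mul, my_integral_mul_exp (bpos hv), mul_zero]

lemma my_gauss_moment2 : ∫ x, x ^ 2 ∂(gaussianReal 0 v) = (v:ℝ) := by
  have hvp := vpos hv
  rw [my_gauss_integral hv]
  have h : ∀ x:ℝ, gaussianPDFReal 0 v x * x ^ 2
      = (√(2 * π * v))⁻¹ * (x ^ 2 * rexp (-(2 * (v:ℝ))⁻¹ * x ^ 2)) := fun x => by
    rw [my_pdf_eq]; ring
  simp_rw [h]
  rw [integral_const_mul, my_integral_sq_exp (bpos hv)]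
  rw [show (2 * (2 * (v:ℝ))⁻¹)⁻¹ = (v:ℝ) by field_simp,
      show π / (2 * (v:ℝ))⁻¹ = 2 * π * (v:ℝ) by field_simp]
  have hs : √(2 * π * (v:ℝ)) ≠ 0 := by
    have : (0:ℝ) < 2 * π * v := by positivity
    positivity
  field_simp

lemma my_gauss_integrable1 : Integrable (fun x => x) (gaussianReal 0 v) := by
  refine my_gauss_integrable hv _ ?_
  have : Integrable fun x : ℝ => (√(2 * π * v))⁻¹ * (x * rexp (-(2 * (v:ℝ))⁻¹ * x ^ 2)) :=
    (integrable_mul_exp_neg_mul_sq (bpos hv)).const_mul _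
  refine this.congr (Filter.Eventually.of_forall fun x => ?_)
  simp only [my_pdf_eq]; ring

lemma my_gauss_integrable2 : Integrable (fun x => x ^ 2) (gaussianReal 0 v) := by
  refine my_gauss_integrable hv _ ?_
  have : Integrable fun x : ℝ => (√(2 * π * v))⁻¹ * (x ^ 2 * rexp (-(2 * (v:ℝ))⁻¹ * x ^ 2)) :=
    (my_integrable_sq_exp (bpos hv)).const_mul _
  refine this.congr (Filter.Eventually.of_forall fun x => ?_)
  simp only [my_pdf_eq]; ring

end moments

lemma my_prod_ite_apply {n : ℕ} (ε : Fin n → ℝ) (i : Fin n) (f : ℝ → ℝ) :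
    (∏ k, (if k = i then f else fun _ => 1) (ε k)) = f (ε i) := by
  classical
  have h : ∀ k, (if k = i then f else fun _ => (1:ℝ)) (ε k)
      = if k = i then f (ε k) else 1 := fun k => by split <;> rfl
  simp_rw [h]
  rw [Finset.prod_ite_eq' Finset.univ i (fun k => f (ε k)), if_pos (Finset.mem_univ i)]

section pilevel
variable {n : ℕ} {v : ℝ≥0} (hv : v ≠ 0)

-- the two-factor coordinate function
private noncomputable def hcoord {n : ℕ} (i j k : Fin n) : ℝ → ℝ := fun x =>
  (if k = i then (fun y : ℝ => y) else fun _ => 1) x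
    * (if k = j then (fun y : ℝ => y) else fun _ => 1) x

lemma my_coord_prod {n : ℕ} (i j : Fin n) (ε : Fin n → ℝ) :
    (∏ k, hcoord i j k (ε k)) = ε i * ε j := by
  unfold hcoord
  rw [Finset.prod_mul_distrib, my_prod_ite_apply, my_prod_ite_apply]

include hv

lemma myp_int1 (i : Fin n) :
    Integrable (fun ε : Fin n → ℝ => ε i) (Measure.pi fun _ => gaussianReal 0 v) := by
  classical
  have h : (fun ε : Fin n → ℝ => ε i)
      = fun ε => ∏ k, (if k = i then (fun x : ℝ => x) else fun _ => 1) (ε k) := by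
    funext ε; rw [my_prod_ite_apply]
  rw [h]
  refine my_integrable_pi_prod fun k => ?_
  by_cases hk : k = i <;> simp [hk, my_gauss_integrable1 hv]

lemma myp_m1 (i : Fin n) :
    ∫ ε : Fin n → ℝ, ε i ∂(Measure.pi fun _ => gaussianReal 0 v) = 0 := by
  classical
  have h : (fun ε : Fin n → ℝ => ε i)
      = fun ε => ∏ k, (if k = i then (fun x : ℝ => x) else fun _ => 1) (ε k) := by
    funext ε; rw [my_prod_ite_apply]
  rw [h, my_integral_pi_prod]
  refine Finset.prod_eq_zero (Finset.mem_univ i) ?_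
  simp [my_gauss_moment1 hv]

lemma my_coord_integrable (i j k : Fin n) :
    Integrable (hcoord i j k) (gaussianReal 0 v) := by
  unfold hcoord
  by_cases hk : k = i <;> by_cases hk' : k = j
  · rw [if_pos hk, if_pos hk']
    exact (my_gauss_integrable2 hv).congr (Filter.Eventually.of_forall fun x => by simp [sq])
  · rw [if_pos hk, if_neg hk']
    exact (my_gauss_integrable1 hv).congr (Filter.Eventually.of_forall fun x => by simp)
  · rw [if_neg hk, if_pos hk']
    exact (my_gauss_integrable1 hv).congr (Filter.Eventually.of_forall fun x => by simp)
  · rw [if_neg hk, if_neg hk']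
    exact (integrable_const 1).congr (Filter.Eventually.of_forall fun x => by simp)

lemma myp_int2 (i j : Fin n) :
    Integrable (fun ε : Fin n → ℝ => ε i * ε j) (Measure.pi fun _ => gaussianReal 0 v) := by
  have h : (fun ε : Fin n → ℝ => ε i * ε j) = fun ε => ∏ k, hcoord i j k (ε k) := by
    funext ε; rw [my_coord_prod]
  rw [h]
  exact my_integrable_pi_prod fun k => my_coord_integrable hv i j k

lemma my_coord_integral (i j k : Fin n) :
    ∫ x, hcoord i j k x ∂(gaussianReal 0 v)
      = if k = i then (if k = j then (v:ℝ) else 0) else (if k = j then 0 else 1) := by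
  unfold hcoord
  by_cases hk : k = i <;> by_cases hk' : k = j
  · rw [if_pos hk, if_pos hk', if_pos hk, if_pos hk']
    rw [show (∫ x, (fun y:ℝ => y) x * (fun y:ℝ => y) x ∂(gaussianReal 0 v))
        = ∫ x, x ^ 2 ∂(gaussianReal 0 v) from by congr 1; funext x; simp [sq]]
    exact my_gauss_moment2 hv
  · rw [if_pos hk, if_neg hk', if_pos hk, if_neg hk']
    simpa using my_gauss_moment1 hv
  · rw [if_neg hk, if_pos hk', if_neg hk, if_pos hk']
    simpa using my_gauss_moment1 hv
  · rw [if_neg hk, if_neg hk', if_neg hk, if_neg hk']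
    simp

lemma myp_m2 (i j : Fin n) :
    ∫ ε : Fin n → ℝ, ε i * ε j ∂(Measure.pi fun _ => gaussianReal 0 v)
      = if i = j then (v:ℝ) else 0 := by
  classical
  have h : (fun ε : Fin n → ℝ => ε i * ε j) = fun ε => ∏ k, hcoord i j k (ε k) := by
    funext ε; rw [my_coord_prod]
  rw [h, my_integral_pi_prod, Finset.prod_congr rfl fun k _ => my_coord_integral hv i j k]
  by_cases hij : i = j
  · subst hij
    rw [if_pos rfl]
    rw [Finset.prod_eq_single i (fun k _ hk => by simp [hk]) (by simp)]
    simp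
  · rw [if_neg hij]
    refine Finset.prod_eq_zero (Finset.mem_univ i) ?_
    simp [hij]

end pilevel

lemma my_posdef {E : Type*} [NormedAddCommGroup E] [InnerProductSpace ℝ E]
    {n : ℕ} (u' : Fin n → E) (σ : ℝ) (hσ : 0 < σ)
    (K : Matrix (Fin n) (Fin n) ℝ) (hK : ∀ i j, K i j = ⟪u' i, u' j⟫) :
    (K + σ ^ 2 • (1 : Matrix (Fin n) (Fin n) ℝ)).PosDef := by
  rw [Matrix.posDef_iff_dotProduct_mulVec]
  constructor
  · -- Hermitian
    have h1 : K.IsHermitian := by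
      ext i j
      simp only [Matrix.conjTranspose_apply, RCLike.star_def, starRingEnd_apply, star_trivial]
      rw [hK, hK, real_inner_comm]
    have h2 : (σ ^ 2 • (1 : Matrix (Fin n) (Fin n) ℝ)).IsHermitian := by
      ext i j
      simp only [Matrix.conjTranspose_apply, Matrix.smul_apply, Matrix.one_apply, star_trivial]
      by_cases h : i = j <;> simp [h, eq_comm]
    exact h1.add h2
  · intro x hx
    have hquad : x ⬝ᵥ (K *ᵥ x) = ⟪∑ i, x i • u' i, ∑ j, x j • u' j⟫ := by
      rw [sum_inner]
      simp_rw [inner_sum, real_inner_smul_left, real_inner_smul_right, ← hK]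
      simp [dotProduct, Matrix.mulVec, dotProduct, Finset.mul_sum]
      exact Finset.sum_congr rfl fun a _ => Finset.sum_congr rfl fun b _ => by ring
    have hq0 : 0 ≤ x ⬝ᵥ (K *ᵥ x) := by
      rw [hquad]
      exact real_inner_self_nonneg
    have hxx : 0 < x ⬝ᵥ x := by
      obtain ⟨i, hi⟩ := Function.ne_iff.mp hx
      exact Finset.sum_pos' (fun k _ => mul_self_nonneg _)
        ⟨i, Finset.mem_univ i, mul_self_pos.mpr hi⟩
    simp only [star_trivial]
    rw [Matrix.add_mulVec, dotProduct_add, Matrix.smul_mulVec, Matrix.one_mulVec,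
      dotProduct_smul]
    have : 0 < σ ^ 2 * (x ⬝ᵥ x) := mul_pos (pow_pos hσ 2) hxx
    simp only [smul_eq_mul]
    linarith

lemma my_key_identity {E : Type*} [NormedAddCommGroup E] [InnerProductSpace ℝ E]
    {n : ℕ} (u : E) (u' : Fin n → E) (σ : ℝ) (hσ : 0 < σ)
    (K : Matrix (Fin n) (Fin n) ℝ) (hK : ∀ i j, K i j = ⟪u' i, u' j⟫)
    (κ : Fin n → ℝ) (hκ : ∀ i, κ i = ⟪u' i, u⟫)
    (w : Fin n → ℝ)
    (hw : w = (K + σ ^ 2 • (1 : Matrix (Fin n) (Fin n) ℝ))⁻¹ *ᵥ κ) :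
    ‖(∑ i, w i • u' i) - u‖ ^ 2 + σ ^ 2 * ∑ i, w i ^ 2
      = ⟪u, u⟫ - κ ⬝ᵥ ((K + σ ^ 2 • (1 : Matrix (Fin n) (Fin n) ℝ))⁻¹ *ᵥ κ) := by
  set A := K + σ ^ 2 • (1 : Matrix (Fin n) (Fin n) ℝ) with hA
  have hpd := my_posdef u' σ hσ K hK
  have hdet : IsUnit A.det := hpd.isUnit.map (Matrix.detMonoidHom)
  have hAw : A *ᵥ w = κ := by
    rw [hw, Matrix.mulVec_mulVec, Matrix.mul_nonsing_inv _ hdet, Matrix.one_mulVec]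
  set p := ∑ i, w i • u' i with hp
  have hpp : ⟪p, p⟫ = w ⬝ᵥ (K *ᵥ w) := by
    rw [hp, sum_inner]
    simp_rw [inner_sum, real_inner_smul_left, real_inner_smul_right, ← hK]
    simp [dotProduct, Matrix.mulVec, Finset.mul_sum]
    exact Finset.sum_congr rfl fun a _ => Finset.sum_congr rfl fun b _ => by ring
  have hpu : ⟪p, u⟫ = w ⬝ᵥ κ := by
    rw [hp, sum_inner]
    simp_rw [real_inner_smul_left, ← hκ]
    simp [dotProduct]
  have hnorm : ‖p - u‖ ^ 2 = ⟪p, p⟫ - 2 * ⟪p, u⟫ + ⟪u, u⟫ := by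
    rw [← real_inner_self_eq_norm_sq, inner_sub_sub_self, real_inner_comm u p]
    ring
  have hsum : w ⬝ᵥ (K *ᵥ w) + σ ^ 2 * ∑ i, w i ^ 2 = w ⬝ᵥ κ := by
    have : w ⬝ᵥ (A *ᵥ w) = w ⬝ᵥ κ := by rw [hAw]
    rw [hA, Matrix.add_mulVec, dotProduct_add, Matrix.smul_mulVec,
      Matrix.one_mulVec, dotProduct_smul, smul_eq_mul] at this
    rw [← this]
    congr 1
    congr 1
    simp [dotProduct, sq]
  have hκw : κ ⬝ᵥ (A⁻¹ *ᵥ κ) = w ⬝ᵥ κ := by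
    rw [← hw, dotProduct_comm]
  rw [hκw, hnorm, hpp, hpu]
  linarith [hsum]

end helpers


theorem stmt_4 {E : Type*} [NormedAddCommGroup E] [InnerProductSpace ℝ E]
    {n : ℕ} (u : E) (u' : Fin n → E) (σ : ℝ) (hσ : 0 < σ)
    (K : Matrix (Fin n) (Fin n) ℝ) (hK : ∀ i j, K i j = ⟪u' i, u' j⟫)
    (κ : Fin n → ℝ) (hκ : ∀ i, κ i = ⟪u' i, u⟫)
    (w : Fin n → ℝ)
    (hw : w = (K + σ ^ 2 • (1 : Matrix (Fin n) (Fin n) ℝ))⁻¹ *ᵥ κ)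
    (σstarSq : ℝ)
    (hσstar : σstarSq =
      ⟪u, u⟫ - κ ⬝ᵥ ((K + σ ^ 2 • (1 : Matrix (Fin n) (Fin n) ℝ))⁻¹ *ᵥ κ))
    (f : E) (B : ℝ) (hB : 1 ≤ B) (hf : ‖f‖ ≤ B)
    (ν : Measure (Fin n → ℝ))
    (hν : ν = Measure.pi fun _ : Fin n => gaussianReal 0 ⟨σ ^ 2, sq_nonneg σ⟩) :
    ∫ ε, ((∑ i, w i * (⟪f, u' i⟫ + ε i)) - ⟪f, u⟫) ^ 2 ∂ν ≤ B ^ 2 * σstarSq := by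
  classical
  subst hν
  set v : NNReal := ⟨σ ^ 2, sq_nonneg σ⟩ with hvdef
  have hv : v ≠ 0 := by
    intro h
    have : (v : ℝ) = 0 := by rw [h]; simp
    exact (pow_pos hσ 2).ne' this
  set c : ℝ := (∑ i, w i * ⟪f, u' i⟫) - ⟪f, u⟫ with hcdef
  have hfun : ∀ ε : Fin n → ℝ,
      ((∑ i, w i * (⟪f, u' i⟫ + ε i)) - ⟪f, u⟫) ^ 2
        = (c ^ 2 + (2 * c) * ∑ i, w i * ε i)
          + ∑ i, ∑ j, (w i * w j) * (ε i * ε j) := by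
    intro ε
    have h1 : (∑ i, w i * (⟪f, u' i⟫ + ε i))
        = (∑ i, w i * ⟪f, u' i⟫) + ∑ i, w i * ε i := by
      rw [← Finset.sum_add_distrib]
      exact Finset.sum_congr rfl fun i _ => by ring
    have h2 : (∑ i, w i * ε i) * (∑ j, w j * ε j)
        = ∑ i, ∑ j, (w i * w j) * (ε i * ε j) := by
      rw [Finset.sum_mul_sum]
      exact Finset.sum_congr rfl fun i _ => Finset.sum_congr rfl fun j _ => by ring
    rw [h1, hcdef, ← h2]
    ring
  simp_rw [hfun]
  have hint1 : ∀ i, Integrable (fun ε : Fin n → ℝ => w i * ε i)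
      (Measure.pi fun _ => gaussianReal 0 v) := fun i => (myp_int1 hv i).const_mul _
  have hS : Integrable (fun ε : Fin n → ℝ => ∑ i, w i * ε i)
      (Measure.pi fun _ => gaussianReal 0 v) := integrable_finset_sum _ fun i _ => hint1 i
  have hcS : Integrable (fun ε : Fin n → ℝ => (2 * c) * ∑ i, w i * ε i)
      (Measure.pi fun _ => gaussianReal 0 v) := hS.const_mul _
  have hQ : Integrable (fun ε : Fin n → ℝ => ∑ i, ∑ j, (w i * w j) * (ε i * ε j))
      (Measure.pi fun _ => gaussianReal 0 v) :=
    integrable_finset_sum _ fun i _ => integrable_finset_sum _ fun j _ =>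
      (myp_int2 hv i j).const_mul _
  have hA : Integrable (fun ε : Fin n → ℝ => c ^ 2 + (2 * c) * ∑ i, w i * ε i)
      (Measure.pi fun _ => gaussianReal 0 v) := (integrable_const _).add hcS
  rw [integral_add hA hQ, integral_add (integrable_const (c ^ 2)) hcS, integral_const]
  have hSval : ∫ ε : Fin n → ℝ, (2 * c) * ∑ i, w i * ε i
      ∂(Measure.pi fun _ => gaussianReal 0 v) = 0 := by
    rw [integral_const_mul, integral_finset_sum _ fun i _ => hint1 i]
    have : ∀ i : Fin n, ∫ ε : Fin n → ℝ, w i * ε i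
        ∂(Measure.pi fun _ => gaussianReal 0 v) = 0 := fun i => by
      rw [integral_const_mul, myp_m1 hv i, mul_zero]
    simp [this]
  have hQval : ∫ ε : Fin n → ℝ, ∑ i, ∑ j, (w i * w j) * (ε i * ε j)
      ∂(Measure.pi fun _ => gaussianReal 0 v) = σ ^ 2 * ∑ i, w i ^ 2 := by
    rw [integral_finset_sum _ fun i _ => integrable_finset_sum _ fun j _ =>
      (myp_int2 hv i j).const_mul _]
    have h1 : ∀ i : Fin n, ∫ ε : Fin n → ℝ, ∑ j, (w i * w j) * (ε i * ε j)
        ∂(Measure.pi fun _ => gaussianReal 0 v) = w i ^ 2 * σ ^ 2 := by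
      intro i
      rw [integral_finset_sum _ fun j _ => (myp_int2 hv i j).const_mul _]
      have h2 : ∀ j : Fin n, ∫ ε : Fin n → ℝ, (w i * w j) * (ε i * ε j)
          ∂(Measure.pi fun _ => gaussianReal 0 v)
          = if i = j then w i * w j * σ ^ 2 else 0 := fun j => by
        rw [integral_const_mul, myp_m2 hv i j, mul_ite, mul_zero]
        congr 1
      simp_rw [h2]
      rw [Finset.sum_ite_eq Finset.univ i (fun j => w i * w j * σ ^ 2),
        if_pos (Finset.mem_univ i)]
      ring
    simp_rw [h1]
    rw [Finset.mul_sum]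
    exact Finset.sum_congr rfl fun i _ => by ring
  rw [hSval, hQval]
  simp only [probReal_univ, one_smul, add_zero]
  -- linear algebra part
  have hkey := my_key_identity u u' σ hσ K hK κ hκ w hw
  rw [← hσstar] at hkey
  have hcinner : c = ⟪f, (∑ i, w i • u' i) - u⟫ := by
    rw [inner_sub_right, inner_sum, hcdef]
    simp_rw [real_inner_smul_right]
  have habs : |c| ≤ B * ‖(∑ i, w i • u' i) - u‖ := by
    rw [hcinner]
    exact (abs_real_inner_le_norm _ _).trans
      (mul_le_mul_of_nonneg_right hf (norm_nonneg _))
  have hc2 : c ^ 2 ≤ B ^ 2 * ‖(∑ i, w i • u' i) - u‖ ^ 2 := by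
    nlinarith [abs_nonneg c, sq_abs c, norm_nonneg ((∑ i, w i • u' i) - u)]
  have hW : (0:ℝ) ≤ ∑ i, w i ^ 2 := Finset.sum_nonneg fun i _ => sq_nonneg _
  have hB2 : (1:ℝ) ≤ B ^ 2 := by nlinarith
  nlinarith [sq_nonneg σ, norm_nonneg ((∑ i, w i • u' i) - u),
    sq_nonneg (‖(∑ i, w i • u' i) - u‖), mul_nonneg (sq_nonneg σ) hW]
end

section
/- Let E be a real inner product space, let u, u₁, …, uₙ be elements of E with ⟪u, u⟫ = 1 and ‖uᵢ‖ ≤ 1 for every i, and let σ > 0. Let K be the n×n real matrix with entries K i j = ⟪uᵢ, uⱼ⟫ and let κ ∈ ℝⁿ have entries κ i = ⟪uᵢ, u⟫. Then 1 − κᵀ (K + σ²·I)⁻¹ κ ≥ σ²/(n + σ²). -/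
open Matrix
open scoped RealInnerProductSpace

private lemma scalar_aux (N σ r d S : ℝ) (hN : 1 ≤ N) (hσ : 0 < σ) (hr : 0 ≤ r)
    (hd : 0 ≤ d) (h1 : 1 - r ≤ d) (hS : r ^ 2 ≤ N * S) (hS0 : 0 ≤ S) :
    σ ^ 2 / (N + σ ^ 2) ≤ d ^ 2 + σ ^ 2 * S := by
  have hNσ : 0 < N + σ ^ 2 := by positivity
  rw [div_le_iff₀ hNσ]
  rcases le_or_gt r 1 with h | h
  · have h2 : (1 - r) ^ 2 ≤ d ^ 2 := by
      apply pow_le_pow_left₀ (by linarith) h1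
    nlinarith [sq_nonneg ((N + σ ^ 2) * r - N), sq_nonneg σ, sq_nonneg r,
      mul_le_mul_of_nonneg_left h2 hNσ.le, mul_le_mul_of_nonneg_left hS (by positivity : (0:ℝ) ≤ σ ^ 2 * (N + σ ^ 2))]
  · have h2 : 1 ≤ N * S := le_trans (by nlinarith) hS
    have key : σ ^ 2 * 1 ≤ σ ^ 2 * (N * S) := mul_le_mul_of_nonneg_left h2 (sq_nonneg σ)
    nlinarith [key, mul_nonneg (sq_nonneg d) (by linarith : (0:ℝ) ≤ N),
      mul_nonneg (mul_nonneg (sq_nonneg σ) (sq_nonneg σ)) hS0,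
      mul_nonneg (sq_nonneg d) (sq_nonneg σ)]

theorem stmt_7 {E : Type*} [NormedAddCommGroup E] [InnerProductSpace ℝ E]
    {n : ℕ} (u : E) (u' : Fin n → E) (hu : ⟪u, u⟫ = 1)
    (hu' : ∀ i, ‖u' i‖ ≤ 1) (σ : ℝ) (hσ : 0 < σ)
    (K : Matrix (Fin n) (Fin n) ℝ) (hK : ∀ i j, K i j = ⟪u' i, u' j⟫)
    (κ : Fin n → ℝ) (hκ : ∀ i, κ i = ⟪u' i, u⟫) :
    σ ^ 2 / (n + σ ^ 2) ≤
      1 - κ ⬝ᵥ ((K + σ ^ 2 • (1 : Matrix (Fin n) (Fin n) ℝ))⁻¹ *ᵥ κ) := by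
  classical
  rcases Nat.eq_zero_or_pos n with hn | hn
  · subst hn
    simp only [dotProduct, Finset.univ_eq_empty, Finset.sum_empty, Nat.cast_zero, zero_add]
    rw [div_self (by positivity)]
    norm_num
  set A : Matrix (Fin n) (Fin n) ℝ := K + σ ^ 2 • (1 : Matrix (Fin n) (Fin n) ℝ) with hAdef
  have hKsym : ∀ i j, K i j = K j i := fun i j => by rw [hK, hK, real_inner_comm]
  have hquad : ∀ x : Fin n → ℝ, x ⬝ᵥ (K *ᵥ x) = ⟪∑ i, x i • u' i, ∑ i, x i • u' i⟫ := by
    intro x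
    simp only [dotProduct, Matrix.mulVec, sum_inner, inner_sum,
      real_inner_smul_left, real_inner_smul_right, ← hK, Finset.mul_sum]
    refine Finset.sum_congr rfl fun i _ => Finset.sum_congr rfl fun j _ => by
      rw [hKsym j i]; ring
  have hquad' : ∀ x : Fin n → ℝ, 0 ≤ x ⬝ᵥ (K *ᵥ x) := fun x => by
    rw [hquad x]; exact real_inner_self_nonneg
  have hAq : ∀ x : Fin n → ℝ, x ⬝ᵥ (A *ᵥ x) = x ⬝ᵥ (K *ᵥ x) + σ ^ 2 * (x ⬝ᵥ x) := by
    intro x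
    rw [hAdef, Matrix.add_mulVec, dotProduct_add, Matrix.smul_mulVec,
      Matrix.one_mulVec, dotProduct_smul, smul_eq_mul]
  have hA : A.PosDef := by
    rw [Matrix.posDef_iff_dotProduct_mulVec]
    constructor
    · ext i j
      simp only [hAdef, Matrix.conjTranspose_apply, Matrix.add_apply, Matrix.smul_apply,
        Matrix.one_apply, star_trivial, smul_eq_mul]
      rw [hKsym j i]
      simp [eq_comm]
    · intro x hx
      have hxx : 0 < x ⬝ᵥ x := by
        have := dotProduct_self_eq_zero (v := x)
        have h0 : x ⬝ᵥ x ≠ 0 := fun h => hx (this.mp h)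
        have h1 : 0 ≤ x ⬝ᵥ x := Finset.sum_nonneg fun i _ => mul_self_nonneg _
        exact lt_of_le_of_ne h1 (Ne.symm h0)
      simp only [star_trivial]
      rw [hAq x]
      have := hquad' x
      nlinarith [pow_pos hσ 2]
  have hdet : IsUnit A.det := hA.det_pos.ne'.isUnit
  set v : Fin n → ℝ := A⁻¹ *ᵥ κ with hv
  have hAv : A *ᵥ v = κ := by
    rw [hv, Matrix.mulVec_mulVec, Matrix.mul_nonsing_inv A hdet, Matrix.one_mulVec]
  set w : E := ∑ i, v i • u' i with hw
  have hwu : ⟪w, u⟫ = κ ⬝ᵥ v := by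
    rw [hw, sum_inner]
    refine Finset.sum_congr rfl fun i _ => ?_
    rw [real_inner_smul_left, hκ i]
    ring
  have hdot : κ ⬝ᵥ v = v ⬝ᵥ (K *ᵥ v) + σ ^ 2 * (v ⬝ᵥ v) := by
    conv_lhs => rw [← hAv]
    rw [dotProduct_comm, hAq v]
  have hwu' : ⟪u, w⟫ = κ ⬝ᵥ v := by rw [real_inner_comm]; exact hwu
  have hnorm : ‖u - w‖ ^ 2 = 1 - 2 * (κ ⬝ᵥ v) + v ⬝ᵥ (K *ᵥ v) := by
    have h1 : ‖u‖ ^ 2 = 1 := by rw [← real_inner_self_eq_norm_sq u, hu]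
    have h2 : ‖w‖ ^ 2 = v ⬝ᵥ (K *ᵥ v) := by
      rw [← real_inner_self_eq_norm_sq w, hw, ← hquad v]
    rw [norm_sub_sq_real, h1, h2, hwu']
  have hkey : 1 - κ ⬝ᵥ v = ‖u - w‖ ^ 2 + σ ^ 2 * (v ⬝ᵥ v) := by
    rw [hnorm]; linarith [hdot]
  rw [hkey]
  -- scalar bound
  set t : ℝ := ∑ i, |v i| with ht
  have hwt : ‖w‖ ≤ t := by
    calc ‖w‖ ≤ ∑ i, ‖v i • u' i‖ := norm_sum_le _ _
    _ ≤ ∑ i, |v i| := by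
        refine Finset.sum_le_sum fun i _ => ?_
        rw [norm_smul, Real.norm_eq_abs]
        calc |v i| * ‖u' i‖ ≤ |v i| * 1 := by
              exact mul_le_mul_of_nonneg_left (hu' i) (abs_nonneg _)
        _ = |v i| := mul_one _
  have hCS : t ^ 2 ≤ (n : ℝ) * (v ⬝ᵥ v) := by
    have := sq_sum_le_card_mul_sum_sq (s := Finset.univ) (f := fun i => |v i|)
    simp only [Finset.card_univ, Fintype.card_fin, sq_abs] at this
    calc t ^ 2 ≤ (n : ℝ) * ∑ i, v i ^ 2 := by exact_mod_cast this
    _ = (n : ℝ) * (v ⬝ᵥ v) := by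
        congr 1
        exact Finset.sum_congr rfl fun i _ => (sq (v i)).symm ▸ rfl
  have hrS : ‖w‖ ^ 2 ≤ (n : ℝ) * (v ⬝ᵥ v) := by
    refine le_trans ?_ hCS
    exact pow_le_pow_left₀ (norm_nonneg w) hwt 2
  have h1r : 1 - ‖w‖ ≤ ‖u - w‖ := by
    have h2 : ‖u‖ = 1 := by
      have := real_inner_self_eq_norm_sq u
      rw [hu] at this
      nlinarith [norm_nonneg u]
    calc 1 - ‖w‖ = ‖u‖ - ‖w‖ := by rw [h2]
    _ ≤ ‖u - w‖ := norm_sub_norm_le u w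
  have hS0 : 0 ≤ v ⬝ᵥ v := Finset.sum_nonneg fun i _ => mul_self_nonneg _
  exact scalar_aux (n : ℝ) σ ‖w‖ ‖u - w‖ (v ⬝ᵥ v) (by exact_mod_cast hn) hσ
    (norm_nonneg w) (norm_nonneg _) h1r hrS hS0
end

section
/- Let φ(t) = (1/√(2π)) exp(−t²/2) be the standard normal density and Φ(x) = ∫_{−∞}^{x} φ(t) dt the standard normal cumulative distribution function, and define h : ℝ → ℝ by h(x) = x·Φ(x) + φ(x). Then x² h(x)/φ(x) tends to 1 as x tends to −∞. -/
open Filter MeasureTheory Set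

/-- auxiliary: x^2 tends to atTop at atBot -/
private lemma sq_tendsto_atBot : Tendsto (fun x : ℝ => x ^ 2) atBot atTop := by
  have h1 : Tendsto (fun x : ℝ => |x|) atBot atTop := tendsto_abs_atBot_atTop
  have h2 : Tendsto (fun y : ℝ => y ^ 2) atTop atTop := tendsto_pow_atTop (two_ne_zero)
  have := h2.comp h1
  refine this.congr fun x => ?_
  simp [sq_abs]

private lemma ratio_tendsto_one (c : ℝ) (hc : 0 < c) :
    Tendsto (fun x : ℝ => x ^ 2 / (x ^ 2 + c)) atBot (nhds 1) := by
  have h1 : Tendsto (fun x : ℝ => x ^ 2 + c) atBot atTop :=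
    tendsto_atTop_add_const_right _ c sq_tendsto_atBot
  have h2 : Tendsto (fun x : ℝ => c / (x ^ 2 + c)) atBot (nhds 0) := by
    have := (tendsto_inv_atTop_zero.comp h1).const_mul c
    simpa [div_eq_mul_inv] using this
  have h3 : Tendsto (fun x : ℝ => 1 - c / (x ^ 2 + c)) atBot (nhds 1) := by
    simpa using tendsto_const_nhds.sub h2
  refine h3.congr' ?_
  filter_upwards [eventually_ne_atBot (0:ℝ)] with x hx
  have hne : x ^ 2 + c ≠ 0 := by positivity
  field_simp
  ring

theorem stmt_13 (φ Φ h : ℝ → ℝ)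
    (hφ : ∀ t, φ t = (1 / Real.sqrt (2 * Real.pi)) * Real.exp (-t ^ 2 / 2))
    (hΦ : ∀ x, Φ x = ∫ t in Set.Iic x, φ t)
    (hh : ∀ x, h x = x * Φ x + φ x) :
    Tendsto (fun x : ℝ => x ^ 2 * h x / φ x) atBot (nhds 1) := by
  have hc : (0:ℝ) < 1 / Real.sqrt (2 * Real.pi) := by positivity
  -- positivity of φ
  have hφpos : ∀ t, 0 < φ t := fun t => by
    rw [hφ t]; positivity
  -- derivative of φ
  have hφderiv : ∀ t, HasDerivAt φ (-t * φ t) t := by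
    intro t
    have h1 : HasDerivAt (fun t : ℝ => -t ^ 2 / 2) (-t) t := by
      have := ((hasDerivAt_pow 2 t).neg).div_const 2
      simpa using this.congr_deriv (by ring)
    have h2 := (h1.exp).const_mul (1 / Real.sqrt (2 * Real.pi))
    have h3 : HasDerivAt (fun y : ℝ => (1 / Real.sqrt (2 * Real.pi)) * Real.exp (-y ^ 2 / 2))
        (-t * φ t) t := by
      refine h2.congr_deriv ?_
      rw [hφ t]; ring
    exact h3.congr_of_eventuallyEq (Eventually.of_forall fun x => (hφ x))
  -- continuity of φ
  have hφcont : Continuous φ := by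
    have : Continuous (fun t : ℝ => (1 / Real.sqrt (2 * Real.pi)) * Real.exp (-t ^ 2 / 2)) := by
      continuity
    exact this.congr fun t => (hφ t).symm
  -- φ tends to 0 at -∞
  have hφ0 : Tendsto φ atBot (nhds 0) := by
    have h1 : Tendsto (fun t : ℝ => -t ^ 2 / 2) atBot atBot := by
      have := sq_tendsto_atBot
      exact (tendsto_neg_atTop_atBot.comp this).atBot_div_const (by norm_num)
    have h2 := (Real.tendsto_exp_atBot.comp h1).const_mul (1 / Real.sqrt (2 * Real.pi))
    refine Tendsto.congr (fun t => (hφ t).symm) ?_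
    simpa using h2
  -- integrability of φ
  have hφint : Integrable φ := by
    have h0 : Integrable (fun t : ℝ => Real.exp (-(1/2 : ℝ) * t ^ 2)) :=
      integrable_exp_neg_mul_sq (by norm_num)
    have h1 := h0.const_mul (1 / Real.sqrt (2 * Real.pi))
    refine h1.congr (Eventually.of_forall fun t => ?_)
    show (1 / Real.sqrt (2 * Real.pi)) * Real.exp (-(1/2 : ℝ) * t ^ 2) = φ t
    rw [show -(1/2 : ℝ) * t ^ 2 = -t ^ 2 / 2 by ring, hφ t]
  -- integrability of t ↦ -t * φ t
  have hmint : Integrable (fun t : ℝ => -t * φ t) := by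
    have : Integrable (fun t : ℝ => t * Real.exp (-(1/2 : ℝ) * t ^ 2)) :=
      integrable_mul_exp_neg_mul_sq (by norm_num)
    have h2 := (this.const_mul (-(1 / Real.sqrt (2 * Real.pi))))
    refine h2.congr (Eventually.of_forall fun t => ?_)
    show -(1 / Real.sqrt (2 * Real.pi)) * (t * Real.exp (-(1/2 : ℝ) * t ^ 2)) = -t * φ t
    rw [show -(1/2 : ℝ) * t ^ 2 = -t ^ 2 / 2 by ring, hφ t]; ring
  -- key integral : ∫ t in Iic x, -t * φ t = φ x
  have hkey : ∀ x : ℝ, ∫ t in Iic x, -t * φ t = φ x := by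
    intro x
    have := integral_Iic_of_hasDerivAt_of_tendsto' (a := x) (f := φ)
      (f' := fun t => -t * φ t) (m := 0)
      (fun t _ => hφderiv t) hmint.integrableOn hφ0
    simpa using this
  -- Φ is nonneg
  have hΦnn : ∀ x, 0 ≤ Φ x := fun x => by
    rw [hΦ x]
    exact setIntegral_nonneg measurableSet_Iic fun t _ => (hφpos t).le
  -- -x * Φ x ≤ φ x for x < 0
  have hbound : ∀ x : ℝ, x < 0 → -x * Φ x ≤ φ x := by
    intro x hx
    have h1 : ∫ t in Iic x, -x * φ t ≤ ∫ t in Iic x, -t * φ t := by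
      refine setIntegral_mono_on ((hφint.integrableOn).const_mul _)
        hmint.integrableOn measurableSet_Iic fun t ht => ?_
      have : x ≤ -x * 1 := by nlinarith
      exact mul_le_mul_of_nonneg_right (by simp at ht; linarith) (hφpos t).le
    rw [hkey x] at h1
    calc -x * Φ x = ∫ t in Iic x, -x * φ t := by rw [hΦ x, integral_const_mul]
    _ ≤ φ x := h1
  -- Φ x ≤ φ x for x ≤ -1
  have hΦle : ∀ x : ℝ, x ≤ -1 → Φ x ≤ φ x := by
    intro x hx
    have h1 := hbound x (by linarith)
    nlinarith [hΦnn x, hφpos x]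
  -- Φ tends to 0
  have hΦ0 : Tendsto Φ atBot (nhds 0) := by
    refine tendsto_of_tendsto_of_tendsto_of_le_of_le' tendsto_const_nhds hφ0 ?_ ?_
    · exact Eventually.of_forall hΦnn
    · filter_upwards [eventually_le_atBot (-1:ℝ)] with x hx using hΦle x hx
  -- h tends to 0 : 0 ≤ h x ≤ φ x for x < 0
  have hh0 : Tendsto h atBot (nhds 0) := by
    refine tendsto_of_tendsto_of_tendsto_of_le_of_le' tendsto_const_nhds hφ0 ?_ ?_ <;>
      filter_upwards [eventually_lt_atBot (0:ℝ)] with x hx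
    · have := hbound x hx
      rw [hh x]; nlinarith
    · have := mul_nonneg (neg_nonneg.mpr hx.le) (hΦnn x)
      rw [hh x]; nlinarith
  -- derivative of Φ
  have hΦderiv : ∀ x, HasDerivAt Φ (φ x) x := by
    intro x
    have hrepr : ∀ y : ℝ, Φ y = Φ 0 + ∫ t in (0:ℝ)..y, φ t := by
      intro y
      rw [hΦ y, hΦ 0, ← intervalIntegral.integral_Iic_sub_Iic hφint.integrableOn
        hφint.integrableOn]
      ring
    have hd : HasDerivAt (fun y => Φ 0 + ∫ t in (0:ℝ)..y, φ t) (φ x) x := by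
      refine (intervalIntegral.integral_hasDerivAt_right (hφint.intervalIntegrable)
        (hφcont.stronglyMeasurableAtFilter _ _) hφcont.continuousAt).const_add _
    exact hd.congr_of_eventuallyEq (Eventually.of_forall fun y => (hrepr y))
  -- derivative of h
  have hhderiv : ∀ x, HasDerivAt h (Φ x) x := by
    intro x
    have hd : HasDerivAt (fun x => x * Φ x + φ x) (1 * Φ x + x * φ x + -x * φ x) x :=
      ((hasDerivAt_id x).mul (hΦderiv x)).add (hφderiv x)
    have hd' : HasDerivAt (fun x => x * Φ x + φ x) (Φ x) x := by
      convert hd using 1; ring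
    exact hd'.congr_of_eventuallyEq (Eventually.of_forall fun y => (hh y))
  ---- Level 2 L'Hôpital : Φ / (-(φ x / x)) → 1
  set g2 : ℝ → ℝ := fun x => -(φ x / x) with hg2def
  set g2' : ℝ → ℝ := fun x => φ x + φ x / x ^ 2 with hg2'def
  have hg2deriv : ∀ x : ℝ, x ≠ 0 → HasDerivAt g2 (g2' x) x := by
    intro x hx
    have hd : HasDerivAt (fun x => φ x / x) ((-x * φ x * x - φ x * 1) / x ^ 2) x :=
      (hφderiv x).div (hasDerivAt_id x) hx
    have := hd.neg
    refine this.congr_deriv ?_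
    show _ = φ x + φ x / x ^ 2
    field_simp
    ring
  have hg2'ne : ∀ x : ℝ, x ≠ 0 → g2' x ≠ 0 := by
    intro x hx
    have := hφpos x
    have hx2 : (0:ℝ) < x ^ 2 := by positivity
    simp only [hg2'def]
    positivity
  have hg20 : Tendsto g2 atBot (nhds 0) := by
    have h1 : Tendsto (fun x : ℝ => (x:ℝ)⁻¹) atBot (nhds 0) := by
      have ha : Tendsto (fun x : ℝ => ((-x)⁻¹ : ℝ)) atBot (nhds 0) :=
        tendsto_inv_atTop_zero.comp tendsto_neg_atBot_atTop
      have hb : Tendsto (fun x : ℝ => (-(-x)⁻¹ : ℝ)) atBot (nhds (-0)) := ha.neg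
      rw [neg_zero] at hb
      exact hb.congr fun x => by rw [inv_neg, neg_neg]
    have h2 : Tendsto (fun x => -(φ x * x⁻¹)) atBot (nhds (-(0 * 0))) := (hφ0.mul h1).neg
    rw [mul_zero, neg_zero] at h2
    exact h2.congr fun x => by simp [hg2def, div_eq_mul_inv]
  have hL2 : Tendsto (fun x => Φ x / g2 x) atBot (nhds 1) := by
    refine HasDerivAt.lhopital_zero_atBot
      (f' := φ) (g' := g2')
      (Eventually.of_forall hΦderiv) ?_ ?_ hΦ0 hg20 ?_
    · filter_upwards [eventually_ne_atBot (0:ℝ)] with x hx using hg2deriv x hx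
    · filter_upwards [eventually_ne_atBot (0:ℝ)] with x hx using hg2'ne x hx
    · have := ratio_tendsto_one 1 one_pos
      refine this.congr' ?_
      filter_upwards [eventually_ne_atBot (0:ℝ)] with x hx
      have hφne := (hφpos x).ne'
      simp only [hg2'def]
      have hA : φ x + φ x / x ^ 2 = φ x * (x ^ 2 + 1) / x ^ 2 := by
        field_simp
      rw [hA, div_div_eq_mul_div, mul_div_mul_left _ _ hφne]
  ---- Level 1 L'Hôpital : h / (φ x / x^2) → 1
  set g1 : ℝ → ℝ := fun x => φ x / x ^ 2 with hg1def
  set g1' : ℝ → ℝ := fun x => (-x * φ x * x ^ 2 - φ x * (2 * x)) / (x ^ 2) ^ 2 with hg1'def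
  have hg1deriv : ∀ x : ℝ, x ≠ 0 → HasDerivAt g1 (g1' x) x := by
    intro x hx
    have hx2 : x ^ 2 ≠ 0 := pow_ne_zero 2 hx
    have hd : HasDerivAt (fun x : ℝ => x ^ 2) (2 * x) x := by
      simpa using hasDerivAt_pow 2 x
    exact (hφderiv x).div hd hx2
  have hg1'ne : ∀ x : ℝ, x < 0 → g1' x ≠ 0 := by
    intro x hx
    have hφx := hφpos x
    have hnum : 0 < -x * φ x * x ^ 2 - φ x * (2 * x) := by
      nlinarith [mul_pos (neg_pos.mpr hx) hφx, sq_nonneg x]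
    have hx2 : (0:ℝ) < x ^ 2 := by nlinarith
    have hden : (0:ℝ) < (x ^ 2) ^ 2 := pow_pos hx2 2
    have := div_pos hnum hden
    simp only [hg1'def]
    exact this.ne'
  have hg10 : Tendsto g1 atBot (nhds 0) := by
    have h2 : Tendsto (fun x : ℝ => (x ^ 2)⁻¹) atBot (nhds 0) :=
      tendsto_inv_atTop_zero.comp sq_tendsto_atBot
    have h3 := hφ0.mul h2
    rw [mul_zero] at h3
    refine h3.congr fun x => ?_
    simp [hg1def, div_eq_mul_inv]
  have hL1 : Tendsto (fun x => h x / g1 x) atBot (nhds 1) := by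
    refine HasDerivAt.lhopital_zero_atBot
      (f' := Φ) (g' := g1')
      (Eventually.of_forall hhderiv) ?_ ?_ hh0 hg10 ?_
    · filter_upwards [eventually_ne_atBot (0:ℝ)] with x hx using hg1deriv x hx
    · filter_upwards [eventually_lt_atBot (0:ℝ)] with x hx using hg1'ne x hx
    · -- Φ / g1' = (Φ / g2) * (g2 / g1'), second factor → 1
      have hfac : Tendsto (fun x => (Φ x / g2 x) * (x ^ 2 / (x ^ 2 + 2))) atBot (nhds 1) := by
        simpa using hL2.mul (ratio_tendsto_one 2 two_pos)
      refine hfac.congr' ?_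
      filter_upwards [eventually_lt_atBot (0:ℝ)] with x hx
      have hxne : x ≠ 0 := hx.ne
      have hφne := (hφpos x).ne'
      have hx22 : x ^ 2 + 2 ≠ 0 := by positivity
      have hnum : -x * φ x * x ^ 2 - φ x * (2 * x) ≠ 0 := by
        have hφx := hφpos x
        have : 0 < -x * φ x * x ^ 2 - φ x * (2 * x) := by
          nlinarith [mul_pos (neg_pos.mpr hx) hφx, sq_nonneg x]
        exact this.ne'
      have hnum2 : -(x * φ x * 2) - x ^ 3 * φ x ≠ 0 := by
        have he : -(x * φ x * 2) - x ^ 3 * φ x = -x * φ x * x ^ 2 - φ x * (2 * x) := by ring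
        rw [he]; exact hnum
      simp only [hg2def, hg1'def]
      field_simp [hnum2]
      have h22 : -2 - x ^ 2 ≠ 0 := by intro h0; nlinarith [sq_nonneg x]
      linear_combination Φ x * mul_inv_cancel₀ h22
  -- conclude
  refine hL1.congr' ?_
  filter_upwards [eventually_lt_atBot (0:ℝ)] with x hx
  have hxne : x ≠ 0 := hx.ne
  have hφne := (hφpos x).ne'
  simp only [hg1def]
  field_simp
end

section
/- Let φ(t) = (1/√(2π)) exp(−t²/2) be the standard normal density and Φ(x) = ∫_{−∞}^{x} φ(t) dt the standard normal cumulative distribution function, define h : ℝ → ℝ by h(x) = x·Φ(x) + φ(x), and for each natural number N ≥ 2 let z_N be the unique real root of g_N(z) = (N − 1)·h(z) + z, and set N′ = (N − 1)/√(2π). Then z_N + √(2·log N′) − 3·(log(log N′) + log 2)/(2·√(2·log N′)) tends to 0 as N → ∞. -/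
open Filter Real MeasureTheory Set

noncomputable def phi18 (t : ℝ) : ℝ := (1 / Real.sqrt (2 * Real.pi)) * Real.exp (-t ^ 2 / 2)
noncomputable def Phi18 (x : ℝ) : ℝ := ∫ t in Set.Iic x, phi18 t

lemma phi18_pos (t : ℝ) : 0 < phi18 t := by
  unfold phi18
  positivity

lemma phi18_neg (t : ℝ) : phi18 (-t) = phi18 t := by
  unfold phi18; ring_nf

lemma phi18_eq (t : ℝ) : phi18 t = (1 / Real.sqrt (2 * Real.pi)) * Real.exp (-(1/2 : ℝ) * t ^ 2) := by
  unfold phi18; ring_nf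

lemma integrable_phi18 : Integrable phi18 := by
  have h := (integrable_exp_neg_mul_sq (by norm_num : (0:ℝ) < 1/2)).const_mul
    (1 / Real.sqrt (2 * Real.pi))
  refine h.congr ?_
  filter_upwards with t
  rw [phi18_eq]

lemma integrable_mul_phi18 : Integrable (fun t => t * phi18 t) := by
  have h := (integrable_mul_exp_neg_mul_sq (by norm_num : (0:ℝ) < 1/2)).const_mul
    (1 / Real.sqrt (2 * Real.pi))
  refine h.congr ?_
  filter_upwards with t
  rw [phi18_eq]; ring

lemma hasDerivAt_phi18 (t : ℝ) : HasDerivAt phi18 (-t * phi18 t) t := by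
  have h1 : HasDerivAt (fun t : ℝ => -t ^ 2 / 2) (-t) t := by
    have := ((hasDerivAt_pow 2 t).neg).div_const 2
    refine this.congr_deriv ?_
    simp; ring
  have h2 := (h1.exp).const_mul (1 / Real.sqrt (2 * Real.pi))
  refine h2.congr_deriv ?_
  unfold phi18; ring

lemma tendsto_phi18_atBot : Tendsto phi18 atBot (nhds 0) := by
  have hsq0 : Tendsto (fun t : ℝ => t ^ 2) atBot atTop := by
    have h1 : Tendsto (fun t : ℝ => -t) atBot atTop := tendsto_neg_atBot_atTop
    have h2 : Tendsto (fun s : ℝ => s ^ 2) atTop atTop := tendsto_pow_atTop two_ne_zero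
    have h3 := h2.comp h1
    refine h3.congr fun t => ?_
    simp [Function.comp, neg_sq]
  have hsq : Tendsto (fun t : ℝ => -t ^ 2 / 2) atBot atBot := by
    have h4 : Tendsto (fun t : ℝ => -t ^ 2) atBot atBot := by
      have := tendsto_neg_atTop_atBot.comp hsq0
      exact this
    exact h4.atBot_div_const (by norm_num : (0:ℝ) < 2)
  have h5 := (Real.tendsto_exp_atBot.comp hsq).const_mul (1 / Real.sqrt (2 * Real.pi))
  simp only [mul_zero] at h5
  exact h5.congr fun t => rfl

lemma integral_Iic_mul_phi18 (x : ℝ) : ∫ t in Set.Iic x, t * phi18 t = -phi18 x := by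
  have h := integral_Iic_of_hasDerivAt_of_tendsto' (f := fun t => -phi18 t)
    (f' := fun t => t * phi18 t) (a := x) (m := 0)
    (fun t _ => (hasDerivAt_phi18 t).neg.congr_deriv (by ring))
    (integrable_mul_phi18.integrableOn)
    (by simpa using tendsto_phi18_atBot.neg)
  simpa using h
lemma continuous_phi18 : Continuous phi18 := by
  unfold phi18; fun_prop

lemma Phi18_nonneg (x : ℝ) : 0 ≤ Phi18 x := by
  unfold Phi18
  exact setIntegral_nonneg measurableSet_Iic fun t _ => (phi18_pos t).le

lemma Phi18_le_crude {x : ℝ} (hx : x < 0) : Phi18 x ≤ -phi18 x / x := by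
  have hmono : Phi18 x ≤ ∫ t in Set.Iic x, (t / x) * phi18 t := by
    unfold Phi18
    refine setIntegral_mono_on integrable_phi18.integrableOn ?_ measurableSet_Iic ?_
    · have : (fun t => (t / x) * phi18 t) = fun t => (1/x) * (t * phi18 t) := by
        funext t; ring
      rw [this]
      exact (integrable_mul_phi18.const_mul _).integrableOn
    · intro t ht
      have h1 : (1:ℝ) ≤ t / x := by
        rw [le_div_iff_of_neg hx]
        simpa using ht
      nlinarith [phi18_pos t]
  have heq : ∫ t in Set.Iic x, (t / x) * phi18 t = -phi18 x / x := by
    have : (fun t => (t / x) * phi18 t) = fun t => (1/x) * (t * phi18 t) := by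
      funext t; ring
    rw [this, MeasureTheory.integral_const_mul, integral_Iic_mul_phi18]
    ring
  linarith [hmono, heq.le, heq.ge]

lemma tendsto_Phi18_atBot : Tendsto Phi18 atBot (nhds 0) := by
  apply squeeze_zero' (Eventually.of_forall fun x => Phi18_nonneg x)
    (g := fun x => -phi18 x / x)
  · filter_upwards [eventually_lt_atBot (0:ℝ)] with x hx
    exact Phi18_le_crude hx
  · have h0 : Tendsto (fun x : ℝ => (-x)⁻¹) atBot (nhds 0) :=
      tendsto_inv_atTop_zero.comp tendsto_neg_atBot_atTop
    have h1 := tendsto_phi18_atBot.mul h0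
    simp only [mul_zero] at h1
    refine h1.congr fun x => ?_
    rw [inv_neg, div_eq_mul_inv]; ring

lemma hasDerivAt_Phi18 (x : ℝ) : HasDerivAt Phi18 (phi18 x) x := by
  have key : Phi18 = fun y => Phi18 0 + ∫ t in (0:ℝ)..y, phi18 t := by
    funext y
    have h := intervalIntegral.integral_Iic_sub_Iic (f := phi18) (μ := volume) (a := (0:ℝ))
      (b := y) integrable_phi18.integrableOn integrable_phi18.integrableOn
    show (∫ t in Set.Iic y, phi18 t) = (∫ t in Set.Iic (0:ℝ), phi18 t) + ∫ t in (0:ℝ)..y, phi18 t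
    linarith [h]
  rw [key]
  have h := intervalIntegral.integral_hasDerivAt_right
    (f := phi18) (a := (0:ℝ)) (b := x)
    (integrable_phi18.intervalIntegrable)
    (integrable_phi18.aestronglyMeasurable.stronglyMeasurableAtFilter)
    (continuous_phi18.continuousAt)
  exact h.const_add _
lemma tendsto_inv_atBot_zero18 : Tendsto (fun x : ℝ => x⁻¹) atBot (nhds 0) := by
  have h0 : Tendsto (fun x : ℝ => (-x)⁻¹) atBot (nhds 0) :=
    tendsto_inv_atTop_zero.comp tendsto_neg_atBot_atTop
  have h1 := h0.neg
  simp only [neg_zero] at h1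
  refine h1.congr fun x => ?_
  rw [inv_neg, neg_neg]

lemma aux_nonneg18 {G G' : ℝ → ℝ} (hd : ∀ x ∈ Set.Iio (0:ℝ), HasDerivAt G (G' x) x)
    (hpos : ∀ x ∈ Set.Iio (0:ℝ), 0 < G' x) (hlim : Tendsto G atBot (nhds 0))
    {x : ℝ} (hx : x < 0) : 0 ≤ G x := by
  have hmono : StrictMonoOn G (Set.Iio 0) := by
    apply strictMonoOn_of_deriv_pos (convex_Iio 0)
    · exact fun y hy => ((hd y hy).continuousAt).continuousWithinAt
    · intro y hy
      rw [interior_Iio] at hy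
      rw [(hd y hy).deriv]
      exact hpos y hy
  refine le_of_tendsto hlim ?_
  filter_upwards [eventually_lt_atBot x] with w hw
  exact (hmono (hw.trans hx) hx hw).le

lemma hasDerivAt_millsG (x : ℝ) (hx : x ≠ 0) :
    HasDerivAt (fun y => Phi18 y - phi18 y * (-y⁻¹ + (y⁻¹)^3))
      (3 * phi18 x * (x⁻¹)^4) x := by
  have hinv := hasDerivAt_inv hx
  have hp : HasDerivAt (fun y : ℝ => -y⁻¹ + (y⁻¹)^3)
      (-(-(x^2)⁻¹) + 3 * (x⁻¹)^2 * (-(x^2)⁻¹)) x := hinv.neg.add (hinv.pow 3)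
  have hprod := (hasDerivAt_phi18 x).mul hp
  have := (hasDerivAt_Phi18 x).sub hprod
  refine this.congr_deriv ?_
  field_simp
  ring

lemma hasDerivAt_millsH (x : ℝ) (hx : x ≠ 0) :
    HasDerivAt (fun y => phi18 y * (-y⁻¹ + (y⁻¹)^3 - 3*(y⁻¹)^5) - Phi18 y)
      (15 * phi18 x * (x⁻¹)^6) x := by
  have hinv := hasDerivAt_inv hx
  have hp : HasDerivAt (fun y : ℝ => -y⁻¹ + (y⁻¹)^3 - 3*(y⁻¹)^5)
      (-(-(x^2)⁻¹) + 3 * (x⁻¹)^2 * (-(x^2)⁻¹) - 3 * (5 * (x⁻¹)^4 * (-(x^2)⁻¹))) x :=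
    (hinv.neg.add (hinv.pow 3)).sub ((hinv.pow 5).const_mul 3)
  have hprod := (hasDerivAt_phi18 x).mul hp
  have := hprod.sub (hasDerivAt_Phi18 x)
  refine this.congr_deriv ?_
  field_simp
  ring

lemma tendsto_millsG : Tendsto (fun y : ℝ => Phi18 y - phi18 y * (-y⁻¹ + (y⁻¹)^3))
    atBot (nhds 0) := by
  have hinv := tendsto_inv_atBot_zero18
  have hp : Tendsto (fun y : ℝ => -y⁻¹ + (y⁻¹)^3) atBot (nhds 0) := by
    have := hinv.neg.add (hinv.pow 3)
    simpa using this
  have := tendsto_Phi18_atBot.sub (tendsto_phi18_atBot.mul hp)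
  simpa using this

lemma tendsto_millsH : Tendsto (fun y : ℝ => phi18 y * (-y⁻¹ + (y⁻¹)^3 - 3*(y⁻¹)^5) - Phi18 y)
    atBot (nhds 0) := by
  have hinv := tendsto_inv_atBot_zero18
  have hp : Tendsto (fun y : ℝ => -y⁻¹ + (y⁻¹)^3 - 3*(y⁻¹)^5) atBot (nhds 0) := by
    have := (hinv.neg.add (hinv.pow 3)).sub ((hinv.pow 5).const_mul 3)
    simpa using this
  have := (tendsto_phi18_atBot.mul hp).sub tendsto_Phi18_atBot
  simpa using this

lemma Phi18_lower {x : ℝ} (hx : x < 0) :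
    phi18 x * (-x⁻¹ + (x⁻¹)^3) ≤ Phi18 x := by
  have h := aux_nonneg18 (G := fun y => Phi18 y - phi18 y * (-y⁻¹ + (y⁻¹)^3))
    (G' := fun y => 3 * phi18 y * (y⁻¹)^4)
    (fun y hy => hasDerivAt_millsG y (ne_of_lt hy))
    (fun y hy => by
      have h1 := phi18_pos y
      have h2 : 0 < (-(y⁻¹))^4 := pow_pos (neg_pos.mpr (inv_lt_zero.mpr hy)) 4
      nlinarith [h2, h1]) tendsto_millsG hx
  linarith [h]

lemma Phi18_upper {x : ℝ} (hx : x < 0) :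
    Phi18 x ≤ phi18 x * (-x⁻¹ + (x⁻¹)^3 - 3*(x⁻¹)^5) := by
  have h := aux_nonneg18 (G := fun y => phi18 y * (-y⁻¹ + (y⁻¹)^3 - 3*(y⁻¹)^5) - Phi18 y)
    (G' := fun y => 15 * phi18 y * (y⁻¹)^6)
    (fun y hy => hasDerivAt_millsH y (ne_of_lt hy))
    (fun y hy => by
      have h1 := phi18_pos y
      have h2 : 0 < (-(y⁻¹))^6 := pow_pos (neg_pos.mpr (inv_lt_zero.mpr hy)) 6
      nlinarith [h2, h1]) tendsto_millsH hx
  linarith [h]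
noncomputable def h18 (x : ℝ) : ℝ := x * Phi18 x + phi18 x

lemma h18_upper {x : ℝ} (hx : x < 0) : h18 x ≤ phi18 x * (x⁻¹)^2 := by
  have hx0 : x ≠ 0 := ne_of_lt hx
  have e0 := mul_le_mul_of_nonpos_left (Phi18_lower hx) (le_of_lt hx)
  have e1 : x * (phi18 x * (-x⁻¹ + (x⁻¹)^3)) = phi18 x * (-1 + (x⁻¹)^2) := by
    field_simp
  unfold h18
  nlinarith [e0, e1]

lemma h18_lower {x : ℝ} (hx : x < 0) : phi18 x * ((x⁻¹)^2 - 3*(x⁻¹)^4) ≤ h18 x := by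
  have hx0 : x ≠ 0 := ne_of_lt hx
  have e0 := mul_le_mul_of_nonpos_left (Phi18_upper hx) (le_of_lt hx)
  have e1 : x * (phi18 x * (-x⁻¹ + (x⁻¹)^3 - 3*(x⁻¹)^5)) =
      phi18 x * (-1 + (x⁻¹)^2 - 3*(x⁻¹)^4) := by
    field_simp
  unfold h18
  nlinarith [e0, e1]

lemma hasDerivAt_h18 (x : ℝ) : HasDerivAt h18 (Phi18 x) x := by
  have hd := ((hasDerivAt_id x).mul (hasDerivAt_Phi18 x)).add (hasDerivAt_phi18 x)
  have : HasDerivAt (fun y => y * Phi18 y + phi18 y)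
      (1 * Phi18 x + x * phi18 x + -x * phi18 x) x := hd
  have he : (1 : ℝ) * Phi18 x + x * phi18 x + -x * phi18 x = Phi18 x := by ring
  rw [he] at this
  exact this

lemma gmono18 {A : ℝ} (hA : 0 ≤ A) : StrictMono (fun x => A * h18 x + x) := by
  apply strictMono_of_deriv_pos
  intro x
  have hd : HasDerivAt (fun x => A * h18 x + x) (A * Phi18 x + 1) x :=
    ((hasDerivAt_h18 x).const_mul A).add (hasDerivAt_id x)
  rw [hd.deriv]
  have := mul_nonneg hA (Phi18_nonneg x)
  linarith

lemma root_lt18 {A zr u : ℝ} (hA : 0 ≤ A) (hroot : A * h18 zr + zr = 0)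
    (hu : 0 < A * h18 u + u) : zr < u := by
  by_contra hle
  push_neg at hle
  have := (gmono18 hA).monotone hle
  linarith

lemma lt_root18 {A zr l : ℝ} (hA : 0 ≤ A) (hroot : A * h18 zr + zr = 0)
    (hl : A * h18 l + l < 0) : l < zr := by
  by_contra hle
  push_neg at hle
  have := (gmono18 hA).monotone hle
  linarith
lemma A_phi18 {A L : ℝ} (hAL : A / Real.sqrt (2*Real.pi) = Real.exp L) (y : ℝ) :
    A * phi18 y = Real.exp (L - y^2/2) := by
  have hπ : Real.sqrt (2*Real.pi) ≠ 0 := by positivity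
  unfold phi18
  rw [show L - y^2/2 = L + (-y^2/2) by ring, Real.exp_add, ← hAL]
  field_simp

lemma core_pos18 {A L ε a c y : ℝ} (hA : 0 < A)
    (hAL : A / Real.sqrt (2*Real.pi) = Real.exp L)
    (ha : a = Real.sqrt (2*L)) (hL : 2 ≤ L)
    (hc : 0 ≤ c) (hc2 : 2*c ≤ ε*a) (hεa : 12 ≤ ε * a) (hε : 0 < ε) (hε1 : ε ≤ 1)
    (hcval : c = 3 * Real.log a)
    (hy : y = a - c/a - ε) :
    0 < A * h18 (-y) + (-y) := by
  have ha0 : 0 < a := by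
    rw [ha]; apply Real.sqrt_pos.mpr; linarith
  have hεaa : ε * a ≤ a := by
    have := mul_le_mul_of_nonneg_right hε1 ha0.le
    linarith [this]
  have ha12 : 12 ≤ a := by linarith
  have hsq : a^2 = 2*L := by rw [ha]; exact Real.sq_sqrt (by linarith)
  have hca1 : c/a ≤ 1 := by
    rw [div_le_one ha0]; linarith
  have hca0 : 0 ≤ c/a := div_nonneg hc ha0.le
  have hy10 : 10 ≤ y := by rw [hy]; linarith
  have hy0 : 0 < y := by linarith
  have hya : y ≤ a := by rw [hy]; linarith
  -- key products
  have hlog2 : Real.log 2 ≤ 1 := by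
    have := Real.log_le_sub_one_of_pos (by norm_num : (0:ℝ) < 2); linarith
  have hloga : Real.log y ≤ Real.log a := Real.log_le_log hy0 hya
  -- main log inequality
  have hamy : a - y = c/a + ε := by rw [hy]; ring
  have hL2 : (c + ε*a)/2 ≤ L - y^2/2 := by
    have h1 : a^2 - y^2 = (c/a + ε)*(a + y) := by rw [← hamy]; ring
    have h2 : (c/a + ε) * a ≤ (c/a + ε) * (a + y) :=
      mul_le_mul_of_nonneg_left (by linarith) (by linarith)
    have h3 : (c/a + ε) * a = c + ε*a := by
      field_simp
    linarith
  have hlogy3 : Real.log (y^2 - 3) ≥ 2 * Real.log y - Real.log 2 := by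
    have h1 : y^2/2 ≤ y^2 - 3 := by nlinarith
    have h2 : Real.log (y^2/2) ≤ Real.log (y^2 - 3) := Real.log_le_log (by nlinarith) h1
    rw [Real.log_div (by positivity) (by norm_num), Real.log_pow] at h2
    push_cast at h2
    linarith
  have hmain : Real.log (y^5) < L - y^2/2 + Real.log (y^2 - 3) := by
    rw [Real.log_pow]
    push_cast
    have h3 : 3 * Real.log y ≤ c := by rw [hcval]; linarith
    linarith [hL2, hlogy3, hεa, hc2, hlog2, h3]
  -- exponentiate
  have hexp : y^5 < Real.exp (L - y^2/2) * (y^2 - 3) := by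
    have h1 := Real.exp_lt_exp.mpr hmain
    rw [Real.exp_add, Real.exp_log (by nlinarith : (0:ℝ) < y^2 - 3),
      Real.exp_log (by positivity : (0:ℝ) < y^5)] at h1
    exact h1
  -- divide by y^4
  have hiv : 0 < (y⁻¹)^4 := pow_pos (inv_pos.mpr hy0) 4
  have h7 := mul_lt_mul_of_pos_right hexp hiv
  have hy0' : y ≠ 0 := ne_of_gt hy0
  have e71 : y^5 * (y⁻¹)^4 = y := by field_simp
  have e72 : (Real.exp (L - y^2/2) * (y^2 - 3)) * (y⁻¹)^4 =
      Real.exp (L - y^2/2) * ((y⁻¹)^2 - 3*(y⁻¹)^4) := by field_simp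
  rw [e71, e72] at h7
  -- lower bound for h18
  have hneg : -y < 0 := by linarith
  have hlow := h18_lower hneg
  have e8 : phi18 (-y) * (((-y)⁻¹)^2 - 3*((-y)⁻¹)^4) =
      phi18 y * ((y⁻¹)^2 - 3*(y⁻¹)^4) := by
    rw [phi18_neg, inv_neg]; ring
  rw [e8] at hlow
  have h9 := mul_le_mul_of_nonneg_left hlow hA.le
  have e10 : A * (phi18 y * ((y⁻¹)^2 - 3*(y⁻¹)^4)) =
      Real.exp (L - y^2/2) * ((y⁻¹)^2 - 3*(y⁻¹)^4) := by
    rw [← mul_assoc, A_phi18 hAL]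
  rw [e10] at h9
  linarith

lemma core_neg18 {A L ε a c y : ℝ} (hA : 0 < A)
    (hAL : A / Real.sqrt (2*Real.pi) = Real.exp L)
    (ha : a = Real.sqrt (2*L)) (hL : 2 ≤ L)
    (hc2 : 2*c ≤ ε*a) (hε : 0 < ε)
    (hy : y = a - c/a + ε) :
    A * h18 (-y) + (-y) < 0 := by
  have ha0 : 0 < a := by
    rw [ha]; apply Real.sqrt_pos.mpr; linarith
  have ha2 : 2 ≤ a := by
    rw [ha]
    have : Real.sqrt 4 ≤ Real.sqrt (2*L) := Real.sqrt_le_sqrt (by linarith)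
    have h4 : Real.sqrt 4 = 2 := by
      rw [show (4:ℝ) = 2^2 by norm_num, Real.sqrt_sq (by norm_num : (0:ℝ) ≤ 2)]
    linarith
  have hsq : a^2 = 2*L := by rw [ha]; exact Real.sq_sqrt (by linarith)
  have hca : c/a ≤ ε := by
    rw [div_le_iff₀ ha0]
    linarith [mul_pos hε ha0]
  have hay : a ≤ y := by rw [hy]; linarith
  have hy0 : 0 < y := by linarith
  have hlogy : 0 < Real.log y := Real.log_pos (by linarith)
  have hmain : L - y^2/2 < Real.log (y^3) := by
    rw [Real.log_pow]
    push_cast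
    have h1 : a^2 ≤ y^2 := by nlinarith
    linarith
  have hexp : Real.exp (L - y^2/2) < y^3 := by
    have h1 := Real.exp_lt_exp.mpr hmain
    rwa [Real.exp_log (by positivity : (0:ℝ) < y^3)] at h1
  have hiv : 0 < (y⁻¹)^2 := pow_pos (inv_pos.mpr hy0) 2
  have h7 := mul_lt_mul_of_pos_right hexp hiv
  have hy0' : y ≠ 0 := ne_of_gt hy0
  have e71 : y^3 * (y⁻¹)^2 = y := by field_simp
  rw [e71] at h7
  have hneg : -y < 0 := by linarith
  have hup := h18_upper hneg
  have e8 : phi18 (-y) * (((-y)⁻¹)^2) = phi18 y * ((y⁻¹)^2) := by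
    rw [phi18_neg, inv_neg]; ring
  rw [e8] at hup
  have h9 := mul_le_mul_of_nonneg_left hup hA.le
  have e10 : A * (phi18 y * ((y⁻¹)^2)) = Real.exp (L - y^2/2) * ((y⁻¹)^2) := by
    rw [← mul_assoc, A_phi18 hAL]
  rw [e10] at h9
  linarith
lemma tendsto_sqrt_atTop18 : Tendsto Real.sqrt atTop atTop := by
  apply tendsto_atTop_atTop_of_monotone (fun x y hxy => Real.sqrt_le_sqrt hxy)
  intro b
  exact ⟨(max b 0)^2, by
    rw [Real.sqrt_sq (le_max_right b 0)]
    exact le_max_left b 0⟩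

theorem stmt_18 (φ Φ h : ℝ → ℝ)
    (hφ : ∀ t, φ t = (1 / Real.sqrt (2 * Real.pi)) * Real.exp (-t ^ 2 / 2))
    (hΦ : ∀ x, Φ x = ∫ t in Set.Iic x, φ t)
    (hh : ∀ x, h x = x * Φ x + φ x)
    (z : ℕ → ℝ)
    (hz : ∀ N : ℕ, 2 ≤ N → ((N : ℝ) - 1) * h (z N) + z N = 0)
    (N' : ℕ → ℝ) (hN' : ∀ N : ℕ, N' N = ((N : ℝ) - 1) / Real.sqrt (2 * Real.pi)) :
    Tendsto (fun N : ℕ => z N + Real.sqrt (2 * Real.log (N' N)) -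
        3 * (Real.log (Real.log (N' N)) + Real.log 2) /
          (2 * Real.sqrt (2 * Real.log (N' N)))) atTop (nhds 0) := by
  -- identify the given functions with our concrete ones
  have hphi_eq : φ = phi18 := funext fun t => by rw [hφ]; rfl
  have hPhi_eq : Φ = Phi18 := funext fun x => by rw [hΦ, hphi_eq]; rfl
  have hh_eq : h = h18 := funext fun x => by rw [hh, hPhi_eq, hphi_eq]; rfl
  rw [hh_eq] at hz
  -- basic tendsto facts
  have haN'T : Tendsto N' atTop atTop := by
    have h1 : Tendsto (fun N : ℕ => ((N:ℝ) - 1)) atTop atTop := by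
      have := tendsto_atTop_add_const_right atTop (-1 : ℝ)
        (tendsto_natCast_atTop_atTop (R := ℝ))
      exact this.congr fun N => by ring
    have h2 := h1.atTop_div_const (show (0:ℝ) < Real.sqrt (2*Real.pi) by positivity)
    exact h2.congr fun N => (hN' N).symm
  have hLT : Tendsto (fun N : ℕ => Real.log (N' N)) atTop atTop :=
    Real.tendsto_log_atTop.comp haN'T
  have hvT : Tendsto (fun N : ℕ => 2 * Real.log (N' N)) atTop atTop :=
    hLT.const_mul_atTop (by norm_num)
  have haT : Tendsto (fun N : ℕ => Real.sqrt (2 * Real.log (N' N))) atTop atTop :=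
    tendsto_sqrt_atTop18.comp hvT
  rw [NormedAddCommGroup.tendsto_nhds_zero]
  intro ε hε
  set ε' : ℝ := min ε 1 with hε'def
  have hε'pos : 0 < ε' := lt_min hε one_pos
  have hε'1 : ε' ≤ 1 := min_le_right _ _
  have hε'ε : ε' ≤ ε := min_le_left _ _
  have hlo := (isLittleO_log_rpow_atTop (by norm_num : (0:ℝ) < 1/2)).def
    (show (0:ℝ) < ε'/6 by positivity)
  filter_upwards [eventually_ge_atTop 2, hLT.eventually_ge_atTop 2,
    haT.eventually_ge_atTop (12/ε'), hvT.eventually hlo] with N hN2 hL2 ha12 hlo'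
  set L : ℝ := Real.log (N' N) with hLdef
  set a : ℝ := Real.sqrt (2 * L) with hadef
  set c : ℝ := 3 * (Real.log L + Real.log 2) / 2 with hcdef
  have hLpos : 0 < L := by linarith
  have ha0 : 0 < a := Real.sqrt_pos.mpr (by linarith)
  have hA : 0 < (N:ℝ) - 1 := by
    have : (2:ℝ) ≤ N := by exact_mod_cast hN2
    linarith
  have hN'pos : 0 < N' N := by rw [hN']; positivity
  have hAL : ((N:ℝ) - 1) / Real.sqrt (2*Real.pi) = Real.exp L := by
    rw [← hN' N]
    exact (Real.exp_log hN'pos).symm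
  have hcval : c = 3 * Real.log a := by
    rw [hcdef, hadef, Real.log_sqrt (by linarith : (0:ℝ) ≤ 2*L),
      Real.log_mul (by norm_num) (by linarith : L ≠ 0)]
    ring
  have hεa : 12 ≤ ε' * a := by
    have h1 := mul_le_mul_of_nonneg_left ha12 hε'pos.le
    have h2 : ε' * (12/ε') = 12 := by field_simp
    linarith
  have hc : 0 ≤ c := by
    have h1 : 0 ≤ Real.log L := Real.log_nonneg (by linarith)
    have h2 : 0 ≤ Real.log 2 := Real.log_nonneg (by norm_num)
    rw [hcdef]; linarith
  have hc2 : 2*c ≤ ε' * a := by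
    have hv1 : (1:ℝ) ≤ 2*L := by linarith
    have hlogv : Real.log (2*L) = Real.log 2 + Real.log L :=
      Real.log_mul (by norm_num) (by linarith)
    have hn1 : ‖Real.log (2*L)‖ = Real.log (2*L) :=
      Real.norm_of_nonneg (Real.log_nonneg hv1)
    have hrw : (2*L) ^ ((1:ℝ)/2) = a := by
      rw [hadef, Real.sqrt_eq_rpow]
    have hn2 : ‖(2*L) ^ ((1:ℝ)/2)‖ = a := by
      rw [hrw]; exact Real.norm_of_nonneg ha0.le
    have := hlo'
    rw [hn1] at this
    have hfin : Real.log (2*L) ≤ ε'/6 * a := by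
      have h3 : ε' / 6 * ‖(2 * L) ^ ((1:ℝ) / 2)‖ = ε'/6 * a := by rw [hn2]
      calc Real.log (2*L) ≤ ε' / 6 * ‖(2 * L) ^ ((1:ℝ) / 2)‖ := this
        _ = ε'/6 * a := h3
    have hpos : 0 ≤ ε' * a := le_of_lt (mul_pos hε'pos ha0)
    rw [hcdef]
    nlinarith [hfin, hlogv, hpos]
  -- apply the core estimates
  have hroot := hz N hN2
  have hpos := core_pos18 (y := a - c/a - ε') hA hAL rfl hL2 hc hc2 hεa hε'pos hε'1 hcval rfl
  have hneg := core_neg18 (y := a - c/a + ε') hA hAL rfl hL2 hc2 hε'pos rfl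
  have hlt : z N < -(a - c/a - ε') := root_lt18 hA.le hroot hpos
  have hgt : -(a - c/a + ε') < z N := lt_root18 hA.le hroot hneg
  have hexpr : z N + a - 3 * (Real.log L + Real.log 2) / (2*a) = z N - (-a + c/a) := by
    have hdd : c / a = 3 * (Real.log L + Real.log 2) / (2*a) := by
      rw [hcdef, div_div]
    rw [hdd]
    ring
  rw [Real.norm_eq_abs]
  have : |z N + a - 3 * (Real.log L + Real.log 2) / (2*a)| < ε' := by
    rw [hexpr, abs_lt]
    constructor <;> linarith
  linarith [this, hε'ε]
end
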